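/- arXiv:2401.13559 — 3 statements merged into one kernel-verified Lean document; each statement's English description precedes it below -/
import Mathlib

section
/- Let α₁ < α₂ < α₃ be real numbers, let N ∈ ℕ ∪ {∞}, and let (a_n)_{n=1}^N be a sequence with a_n > α₁ for all n and with (1/i)(a₁ + a₂ + ⋯ + a_i) ≤ α₂ for every integer 1 ≤ i ≤ N. Let {k_i} be the increasing enumeration of the direction-preserving Pliss moments and {m_i} the increasing enumeration of the direction-reversing Pliss moments of the sequence. Then whenever the i-th direction-preserving Pliss moment k_i exists one has i/k_i ≥ (α₂ − α₃)/(α₁ − α₃), and whenever the i-th direction-reversing Pliss moment m_i exists one has i/m_i ≥ (α₂ − α₃)/(α₁ − α₃); in particular, if N = ∞ then there are infinitely many Pliss moments of each kind. -/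
/-- partial-sum function shifted by `α₃`. -/
noncomputable def pS (α₃ : ℝ) (a : ℕ → ℝ) (n : ℕ) : ℝ :=
  (∑ j ∈ Finset.Icc 1 n, a j) - α₃ * n

lemma pS_sum (α₃ : ℝ) (a : ℕ → ℝ) (j i : ℕ) (hj : 1 ≤ j) :
    ∑ x ∈ Finset.Icc j (j + i), a x
      = pS α₃ a (j + i) - pS α₃ a (j - 1) + α₃ * ((i : ℝ) + 1) := by
  have h1 : Finset.Icc 1 (j - 1) = Finset.Ioc 0 (j - 1) := by
    rw [← Finset.Icc_add_one_left_eq_Ioc]; rfl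
  have h2 : Finset.Icc j (j + i) = Finset.Ioc (j - 1) (j + i) := by
    rw [← Finset.Icc_add_one_left_eq_Ioc]; congr 1; omega
  have h4 := Finset.sum_Ioc_consecutive a (by omega : 0 ≤ j - 1) (by omega : j - 1 ≤ j + i)
  have h3 : Finset.Icc 1 (j + i) = Finset.Ioc 0 (j + i) := by
    rw [← Finset.Icc_add_one_left_eq_Ioc]; rfl
  have hsplit : (∑ x ∈ Finset.Icc 1 (j - 1), a x) + ∑ x ∈ Finset.Icc j (j + i), a x
      = ∑ x ∈ Finset.Icc 1 (j + i), a x := by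
    rw [h1, h2, h3]; exact h4
  have hc : ((j - 1 : ℕ) : ℝ) = (j : ℝ) - 1 := by
    push_cast [Nat.cast_sub hj]; ring
  simp only [pS, hc]
  push_cast
  linarith

lemma hi_core (f : ℕ → ℝ) (β : ℝ) (T : ℕ)
    (hstep : ∀ n, n < T → f n + β < f (n + 1))
    (h0 : ∀ u, u ≤ T → f u ≤ f 0)
    (R : Finset ℕ)
    (hmem : ∀ t, t ∈ R ↔ (t ≤ T ∧ ∀ u, t ≤ u → u ≤ T → f u ≤ f t)) :
    ∀ t ∈ R, f 0 + (((R.filter (· ≤ t)).card : ℝ) - 1) * β ≤ f t := by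
  have h0R : 0 ∈ R := (hmem 0).mpr ⟨Nat.zero_le _, fun u _ hu => h0 u hu⟩
  intro t
  induction t using Nat.strong_induction_on with
  | _ t IH =>
    intro ht
    rcases Nat.eq_zero_or_pos t with rfl | htpos
    · have hsing : R.filter (· ≤ 0) = {0} := by
        ext u
        simp only [Finset.mem_filter, Finset.mem_singleton]
        constructor
        · rintro ⟨_, hu⟩; omega
        · rintro rfl; exact ⟨h0R, le_refl 0⟩
      rw [hsing]; simp
    · have htT := ((hmem t).mp ht).1
      have htrec := ((hmem t).mp ht).2
      have hne : (R.filter (· < t)).Nonempty :=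
        ⟨0, Finset.mem_filter.mpr ⟨h0R, htpos⟩⟩
      obtain ⟨t', ht'mem, ht'max⟩ : ∃ t' ∈ R.filter (· < t), ∀ u ∈ R.filter (· < t), u ≤ t' :=
        ⟨_, Finset.max'_mem _ hne, fun u hu => Finset.le_max' _ u hu⟩
      have ht'R : t' ∈ R := (Finset.mem_filter.mp ht'mem).1
      have ht'lt : t' < t := (Finset.mem_filter.mp ht'mem).2
      have hIcc : (Finset.Icc (t' + 1) T).Nonempty :=
        ⟨t, Finset.mem_Icc.mpr ⟨by omega, htT⟩⟩
      obtain ⟨w, hwmem, hwmax⟩ := Finset.exists_max_image (Finset.Icc (t' + 1) T) f hIcc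
      have hw1 : t' + 1 ≤ w := (Finset.mem_Icc.mp hwmem).1
      have hw2 : w ≤ T := (Finset.mem_Icc.mp hwmem).2
      have hwR : w ∈ R := (hmem w).mpr ⟨hw2, fun u hu1 hu2 =>
        hwmax u (Finset.mem_Icc.mpr ⟨le_trans hw1 hu1, hu2⟩)⟩
      have hwt : t ≤ w := by
        by_contra hcon
        have : w ≤ t' := ht'max w (Finset.mem_filter.mpr ⟨hwR, by omega⟩)
        omega
      have key : f (t' + 1) ≤ f t := by
        have hA : f (t' + 1) ≤ f w := hwmax (t' + 1) (Finset.mem_Icc.mpr ⟨le_refl _, by omega⟩)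
        have hB : f w ≤ f t := htrec w hwt hw2
        linarith
      have hstep' : f t' + β < f (t' + 1) := hstep t' (by omega)
      have hcount : (R.filter (· ≤ t)).card = (R.filter (· ≤ t')).card + 1 := by
        have hins : R.filter (· ≤ t) = insert t (R.filter (· ≤ t')) := by
          ext u
          simp only [Finset.mem_filter, Finset.mem_insert]
          constructor
          · rintro ⟨huR, hut⟩
            rcases eq_or_lt_of_le hut with rfl | hlt
            · exact Or.inl rfl
            · exact Or.inr ⟨huR, ht'max u (Finset.mem_filter.mpr ⟨huR, hlt⟩)⟩
          · rintro (rfl | ⟨huR, hut'⟩)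
            · exact ⟨ht, le_refl _⟩
            · exact ⟨huR, by omega⟩
        rw [hins, Finset.card_insert_of_notMem]
        simp only [Finset.mem_filter]
        rintro ⟨_, h⟩
        omega
      have hIH := IH t' ht'lt ht'R
      rw [hcount]
      push_cast
      linarith

lemma lo_core (f : ℕ → ℝ) (β : ℝ) (T : ℕ)
    (hstep : ∀ n, n < T → f n + β < f (n + 1))
    (L : Finset ℕ)
    (hmem : ∀ t, t ∈ L ↔ (t ≤ T ∧ ∀ u, u ≤ t → f t ≤ f u)) :
    ∀ t ∈ L, f 0 + (((L.filter (· ≤ t)).card : ℝ) - 1) * β ≤ f t := by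
  have h0L : 0 ∈ L := (hmem 0).mpr ⟨Nat.zero_le _, fun u hu => by
    interval_cases u; exact le_refl _⟩
  intro t
  induction t using Nat.strong_induction_on with
  | _ t IH =>
    intro ht
    rcases Nat.eq_zero_or_pos t with rfl | htpos
    · have hsing : L.filter (· ≤ 0) = {0} := by
        ext u
        simp only [Finset.mem_filter, Finset.mem_singleton]
        constructor
        · rintro ⟨_, hu⟩; omega
        · rintro rfl; exact ⟨h0L, le_refl 0⟩
      rw [hsing]; simp
    · have htT := ((hmem t).mp ht).1
      have htrec := ((hmem t).mp ht).2
      have hne : (L.filter (· < t)).Nonempty :=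
        ⟨0, Finset.mem_filter.mpr ⟨h0L, htpos⟩⟩
      obtain ⟨t', ht'mem, ht'max⟩ : ∃ t' ∈ L.filter (· < t), ∀ u ∈ L.filter (· < t), u ≤ t' :=
        ⟨_, Finset.max'_mem _ hne, fun u hu => Finset.le_max' _ u hu⟩
      have ht'L : t' ∈ L := (Finset.mem_filter.mp ht'mem).1
      have ht'lt : t' < t := (Finset.mem_filter.mp ht'mem).2
      obtain ⟨w, hwmem, hwmin⟩ := Finset.exists_min_image (Finset.Icc 0 (t - 1)) f
        ⟨0, Finset.mem_Icc.mpr ⟨le_refl _, Nat.zero_le _⟩⟩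
      have hw2 : w ≤ t - 1 := (Finset.mem_Icc.mp hwmem).2
      have hwL : w ∈ L := (hmem w).mpr ⟨by omega, fun u hu =>
        hwmin u (Finset.mem_Icc.mpr ⟨Nat.zero_le _, by omega⟩)⟩
      have hwle : w ≤ t' := ht'max w (Finset.mem_filter.mpr ⟨hwL, by omega⟩)
      have key : f t' ≤ f (t - 1) := by
        have hA : f t' ≤ f w := ((hmem t').mp ht'L).2 w hwle
        have hB : f w ≤ f (t - 1) := hwmin (t - 1) (Finset.mem_Icc.mpr ⟨Nat.zero_le _, le_refl _⟩)
        linarith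
      have hstep' : f (t - 1) + β < f t := by
        have := hstep (t - 1) (by omega)
        have he : t - 1 + 1 = t := by omega
        rwa [he] at this
      have hcount : (L.filter (· ≤ t)).card = (L.filter (· ≤ t')).card + 1 := by
        have hins : L.filter (· ≤ t) = insert t (L.filter (· ≤ t')) := by
          ext u
          simp only [Finset.mem_filter, Finset.mem_insert]
          constructor
          · rintro ⟨huL, hut⟩
            rcases eq_or_lt_of_le hut with rfl | hlt
            · exact Or.inl rfl
            · exact Or.inr ⟨huL, ht'max u (Finset.mem_filter.mpr ⟨huL, hlt⟩)⟩
          · rintro (rfl | ⟨huL, hut'⟩)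
            · exact ⟨ht, le_refl _⟩
            · exact ⟨huL, by omega⟩
        rw [hins, Finset.card_insert_of_notMem]
        simp only [Finset.mem_filter]
        rintro ⟨_, h⟩
        omega
      have hIH := IH t' ht'lt ht'L
      rw [hcount]
      push_cast
      linarith

/-- `k` is a direction-preserving Pliss moment of the sequence `a` (indexed from `1`),
with horizon `N ∈ ℕ ∪ {∞}` and threshold `α₃`:
`(1/(i+1)) (a_k + ⋯ + a_(k+i)) ≤ α₃` for all integers `0 ≤ i ≤ N - k`. -/
def DirPresPliss (N : ℕ∞) (a : ℕ → ℝ) (α₃ : ℝ) (k : ℕ) : Prop :=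
  1 ≤ k ∧ (k : ℕ∞) ≤ N ∧
    ∀ i : ℕ, ((k + i : ℕ) : ℕ∞) ≤ N →
      ∑ j ∈ Finset.Icc k (k + i), a j ≤ α₃ * ((i : ℝ) + 1)

/-- `m` is a direction-reversing Pliss moment of the sequence `a` (indexed from `1`),
with horizon `N ∈ ℕ ∪ {∞}` and threshold `α₃`: either `m = 1`, or `m > 1` and
`(1/i) (a_(m-i) + ⋯ + a_(m-1)) ≤ α₃` for all integers `1 ≤ i < m`. -/
def DirRevPliss (N : ℕ∞) (a : ℕ → ℝ) (α₃ : ℝ) (m : ℕ) : Prop :=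
  1 ≤ m ∧ (m : ℕ∞) ≤ N ∧
    (m = 1 ∨ ∀ i : ℕ, 1 ≤ i → i < m →
      ∑ j ∈ Finset.Icc (m - i) (m - 1), a j ≤ α₃ * (i : ℝ))

/-- **Pliss lemma.** If `α₁ < α₂ < α₃`, `a_n > α₁` for all `1 ≤ n ≤ N`, and all the averages
`(1/i)(a₁ + ⋯ + a_i)` for `1 ≤ i ≤ N` are at most `α₂`, then whenever the `i`-th
direction-preserving (resp. direction-reversing) Pliss moment `k_i` exists — equivalently,
whenever `k` is such a moment and `i` is the number of such moments in `[1, k]` — one has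
`i / k_i ≥ (α₂ - α₃)/(α₁ - α₃)`; moreover if `N = ∞` there are infinitely many Pliss moments
of each kind. -/
theorem pliss_lemma_finite_horizon
    (α₁ α₂ α₃ : ℝ) (h12 : α₁ < α₂) (h23 : α₂ < α₃)
    (N : ℕ∞) (a : ℕ → ℝ)
    (ha : ∀ n : ℕ, 1 ≤ n → (n : ℕ∞) ≤ N → α₁ < a n)
    (havg : ∀ i : ℕ, 1 ≤ i → (i : ℕ∞) ≤ N →
      ∑ n ∈ Finset.Icc 1 i, a n ≤ α₂ * (i : ℝ)) :
    (∀ k : ℕ, DirPresPliss N a α₃ k →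
      (α₂ - α₃) / (α₁ - α₃) ≤
        ({j : ℕ | j ≤ k ∧ DirPresPliss N a α₃ j}.ncard : ℝ) / (k : ℝ)) ∧
    (∀ m : ℕ, DirRevPliss N a α₃ m →
      (α₂ - α₃) / (α₁ - α₃) ≤
        ({j : ℕ | j ≤ m ∧ DirRevPliss N a α₃ j}.ncard : ℝ) / (m : ℝ)) ∧
    (N = ⊤ → {k : ℕ | DirPresPliss N a α₃ k}.Infinite ∧
      {m : ℕ | DirRevPliss N a α₃ m}.Infinite) := by
  classical
  set f : ℕ → ℝ := pS α₃ a with hf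
  have hf0 : f 0 = 0 := by simp [hf, pS]
  have hfsum : ∀ j i : ℕ, 1 ≤ j →
      ∑ x ∈ Finset.Icc j (j + i), a x = f (j + i) - f (j - 1) + α₃ * ((i : ℝ) + 1) := by
    intro j i hj
    rw [hf]
    exact pS_sum α₃ a j i hj
  have hfsucc : ∀ n : ℕ, f (n + 1) = f n + a (n + 1) - α₃ := by
    intro n
    have h := hfsum (n + 1) 0 (by omega)
    simp only [Nat.add_zero, Nat.add_sub_cancel, Finset.Icc_self, Finset.sum_singleton,
      Nat.cast_zero] at h
    linarith
  have hstepN : ∀ n : ℕ, ((n + 1 : ℕ) : ℕ∞) ≤ N → f n + (α₁ - α₃) < f (n + 1) := by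
    intro n hn
    have h1 := ha (n + 1) (by omega) hn
    have h2 := hfsucc n
    linarith
  have hbound : ∀ n : ℕ, (n : ℕ∞) ≤ N → f n ≤ (α₂ - α₃) * n := by
    intro n hn
    rcases Nat.eq_zero_or_pos n with rfl | hpos
    · simp [hf0]
    · have h1 := havg n hpos hn
      rw [hf]
      simp only [pS]
      nlinarith [h1]
  have hcastle : ∀ u v : ℕ, u ≤ v → (v : ℕ∞) ≤ N → (u : ℕ∞) ≤ N := by
    intro u v huv hv
    exact le_trans (by exact_mod_cast huv) hv
  have hpres : ∀ j : ℕ, DirPresPliss N a α₃ j ↔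
      (1 ≤ j ∧ (j : ℕ∞) ≤ N ∧ ∀ u : ℕ, j ≤ u → (u : ℕ∞) ≤ N → f u ≤ f (j - 1)) := by
    intro j
    constructor
    · rintro ⟨hj1, hjN, hcond⟩
      refine ⟨hj1, hjN, fun u hju huN => ?_⟩
      have h := hcond (u - j) (by rw [Nat.add_sub_cancel' hju]; exact huN)
      rw [Nat.add_sub_cancel' hju] at h
      have hs := hfsum j (u - j) hj1
      rw [Nat.add_sub_cancel' hju] at hs
      linarith
    · rintro ⟨hj1, hjN, hrec⟩
      refine ⟨hj1, hjN, fun i hiN => ?_⟩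
      have hs := hfsum j i hj1
      have h := hrec (j + i) (Nat.le_add_right j i) hiN
      linarith
  have hrev : ∀ j : ℕ, DirRevPliss N a α₃ j ↔
      (1 ≤ j ∧ (j : ℕ∞) ≤ N ∧ ∀ u : ℕ, u ≤ j - 1 → f (j - 1) ≤ f u) := by
    intro j
    constructor
    · rintro ⟨hj1, hjN, hcond⟩
      refine ⟨hj1, hjN, fun u hu => ?_⟩
      rcases eq_or_lt_of_le hu with heq | hult
      · rw [heq]
      · rcases hcond with hj1' | hcond
        · omega
        · have h := hcond (j - 1 - u) (by omega) (by omega)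
          have he : j - (j - 1 - u) = u + 1 := by omega
          rw [he] at h
          have hs := hfsum (u + 1) (j - 1 - (u + 1)) (by omega)
          have he2 : u + 1 + (j - 1 - (u + 1)) = j - 1 := by omega
          rw [he2] at hs
          simp only [Nat.add_sub_cancel] at hs
          have hcast : ((j - 1 - u : ℕ) : ℝ) = ((j - 1 - (u + 1) : ℕ) : ℝ) + 1 := by
            have he3 : j - 1 - u = (j - 1 - (u + 1)) + 1 := by omega
            rw [he3]; push_cast; ring
          rw [hcast] at h
          linarith
    · rintro ⟨hj1, hjN, hrec⟩
      refine ⟨hj1, hjN, Or.inr fun i hi1 hij => ?_⟩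
      have he : j - i = (j - 1 - i) + 1 := by omega
      have hs := hfsum (j - i) (i - 1) (by omega)
      have he2 : j - i + (i - 1) = j - 1 := by omega
      rw [he2] at hs
      have h := hrec (j - i - 1) (by omega)
      have he3 : j - i - 1 = j - 1 - i := by omega
      have hcast : ((i - 1 : ℕ) : ℝ) + 1 = (i : ℝ) := by
        have he4 : i = (i - 1) + 1 := by omega
        nth_rewrite 2 [he4]
        push_cast
        ring
      rw [hcast] at hs
      have he5 : j - i - 1 = j - i - 1 := rfl
      rw [show j - i - 1 = (j - i) - 1 from rfl] at h
      linarith [h, hs]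
  have hflip : (α₂ - α₃) / (α₁ - α₃) = (α₃ - α₂) / (α₃ - α₁) := by
    rw [← neg_div_neg_eq]; ring_nf
  refine ⟨?_, ?_, ?_⟩
  · -- direction-preserving count
    intro k hk
    obtain ⟨hk1, hkN, hkrec⟩ := (hpres k).mp hk
    set T := k - 1 with hT
    set R : Finset ℕ := (Finset.range (T + 1)).filter
      (fun t => ∀ u, t ≤ u → u ≤ T → f u ≤ f t) with hRdef
    have hRmem : ∀ t, t ∈ R ↔ (t ≤ T ∧ ∀ u, t ≤ u → u ≤ T → f u ≤ f t) := by
      intro t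
      simp [hRdef, Finset.mem_filter, Finset.mem_range, Nat.lt_succ_iff]
    have hler : ∀ u : ℕ, u ≤ T → (u : ℕ∞) ≤ N := fun u hu => hcastle u k (by omega) hkN
    have hTR : T ∈ R := (hRmem T).mpr ⟨le_refl _, fun u h1 h2 => by
      have heq : u = T := le_antisymm h2 h1
      rw [heq]⟩
    have hset : {j : ℕ | j ≤ k ∧ DirPresPliss N a α₃ j} = ↑(R.image (· + 1)) := by
      ext j
      simp only [Set.mem_setOf_eq, Finset.coe_image, Set.mem_image, Finset.mem_coe]
      constructor
      · rintro ⟨hjk, hmom⟩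
        obtain ⟨hj1, hjN, hjrec⟩ := (hpres j).mp hmom
        refine ⟨j - 1, (hRmem _).mpr ⟨by omega, fun u h1 h2 => ?_⟩, by omega⟩
        rcases Nat.lt_or_ge u j with hu | hu
        · have heq : u = j - 1 := by omega
          rw [heq]
        · exact hjrec u hu (hler u h2)
      · rintro ⟨t, htR, rfl⟩
        obtain ⟨htT, htrec⟩ := (hRmem t).mp htR
        have hjk : t + 1 ≤ k := by omega
        refine ⟨hjk, (hpres _).mpr ⟨by omega, hcastle (t + 1) k hjk hkN,
          fun u hu huN => ?_⟩⟩
        simp only [Nat.add_sub_cancel]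
        rcases le_or_gt u T with hcase | hcase
        · exact htrec u (by omega) hcase
        · have h1 : f u ≤ f (k - 1) := hkrec u (by omega) huN
          have h2 : f T ≤ f t := htrec T htT (le_refl T)
          rw [← hT] at h1
          linarith
    have hcard : {j : ℕ | j ≤ k ∧ DirPresPliss N a α₃ j}.ncard = R.card := by
      rw [hset, Set.ncard_coe_finset,
        Finset.card_image_of_injective _ (add_left_injective 1)]
    have hmain := hi_core f (α₁ - α₃) T
      (fun n hn => hstepN n (hler (n + 1) (by omega)))
      (fun u hu => by
        have h1 := hbound u (hler u hu)
        have h2 : (α₂ - α₃) * (u : ℝ) ≤ 0 :=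
          mul_nonpos_of_nonpos_of_nonneg (by linarith) (Nat.cast_nonneg u)
        rw [hf0]; linarith)
      R hRmem T hTR
    have hfilt : R.filter (· ≤ T) = R :=
      Finset.filter_true_of_mem (fun x hx => ((hRmem x).mp hx).1)
    rw [hfilt] at hmain
    have hfT : f T ≤ (α₂ - α₃) * (T : ℝ) := hbound T (hler T (le_refl T))
    have hTc : (T : ℝ) = (k : ℝ) - 1 := by
      rw [hT]; push_cast [Nat.cast_sub hk1]; ring
    have hkpos : (0 : ℝ) < (k : ℝ) := by exact_mod_cast hk1
    rw [hcard, hflip, div_le_div_iff₀ (by linarith) hkpos]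
    have hkey : (R.card : ℝ) * (α₁ - α₃) ≤ (α₂ - α₃) * (k : ℝ) := by
      rw [hf0] at hmain
      rw [hTc] at hfT
      nlinarith [hmain, hfT]
    nlinarith [hkey]
  · -- direction-reversing count
    intro m hm
    obtain ⟨hm1, hmN, hmrec⟩ := (hrev m).mp hm
    set T := m - 1 with hT
    set L : Finset ℕ := (Finset.range (T + 1)).filter
      (fun t => ∀ u, u ≤ t → f t ≤ f u) with hLdef
    have hLmem : ∀ t, t ∈ L ↔ (t ≤ T ∧ ∀ u, u ≤ t → f t ≤ f u) := by
      intro t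
      simp [hLdef, Finset.mem_filter, Finset.mem_range, Nat.lt_succ_iff]
    have hler : ∀ u : ℕ, u ≤ T → (u : ℕ∞) ≤ N := fun u hu => hcastle u m (by omega) hmN
    have hTL : T ∈ L := (hLmem T).mpr ⟨le_refl _, fun u hu => hmrec u (by omega)⟩
    have hset : {j : ℕ | j ≤ m ∧ DirRevPliss N a α₃ j} = ↑(L.image (· + 1)) := by
      ext j
      simp only [Set.mem_setOf_eq, Finset.coe_image, Set.mem_image, Finset.mem_coe]
      constructor
      · rintro ⟨hjm, hmom⟩
        obtain ⟨hj1, hjN, hjrec⟩ := (hrev j).mp hmom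
        exact ⟨j - 1, (hLmem _).mpr ⟨by omega, fun u hu => hjrec u hu⟩, by omega⟩
      · rintro ⟨t, htL, rfl⟩
        obtain ⟨htT, htrec⟩ := (hLmem t).mp htL
        have hjm : t + 1 ≤ m := by omega
        refine ⟨hjm, (hrev _).mpr ⟨by omega, hcastle (t + 1) m hjm hmN, fun u hu => ?_⟩⟩
        simp only [Nat.add_sub_cancel] at hu ⊢
        exact htrec u hu
    have hcard : {j : ℕ | j ≤ m ∧ DirRevPliss N a α₃ j}.ncard = L.card := by
      rw [hset, Set.ncard_coe_finset,
        Finset.card_image_of_injective _ (add_left_injective 1)]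
    have hmain := lo_core f (α₁ - α₃) T
      (fun n hn => hstepN n (hler (n + 1) (by omega)))
      L hLmem T hTL
    have hfilt : L.filter (· ≤ T) = L :=
      Finset.filter_true_of_mem (fun x hx => ((hLmem x).mp hx).1)
    rw [hfilt] at hmain
    have hfT : f T ≤ (α₂ - α₃) * (T : ℝ) := hbound T (hler T (le_refl T))
    have hTc : (T : ℝ) = (m : ℝ) - 1 := by
      rw [hT]; push_cast [Nat.cast_sub hm1]; ring
    have hmpos : (0 : ℝ) < (m : ℝ) := by exact_mod_cast hm1
    rw [hcard, hflip, div_le_div_iff₀ (by linarith) hmpos]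
    have hkey : (L.card : ℝ) * (α₁ - α₃) ≤ (α₂ - α₃) * (m : ℝ) := by
      rw [hf0] at hmain
      rw [hTc] at hfT
      nlinarith [hmain, hfT]
    nlinarith [hkey]
  · -- infinitely many moments when N = ⊤
    intro hNtop
    subst hNtop
    constructor
    · apply Set.infinite_of_forall_exists_gt
      intro n
      obtain ⟨M0, hM0⟩ := exists_nat_ge (f (n + 1) / (α₂ - α₃))
      set M := max M0 (n + 1) with hMdef
      have hM1 : (α₂ - α₃) * (M : ℝ) ≤ f (n + 1) := by
        have h1 : f (n + 1) / (α₂ - α₃) ≤ (M : ℝ) :=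
          le_trans hM0 (by exact_mod_cast le_max_left M0 (n + 1))
        rw [div_le_iff_of_neg (by linarith)] at h1
        linarith
      obtain ⟨w, hwmem, hwmax⟩ := Finset.exists_max_image (Finset.Icc (n + 1) M) f
        ⟨n + 1, Finset.mem_Icc.mpr ⟨le_refl _, le_max_right _ _⟩⟩
      have hw1 : n + 1 ≤ w := (Finset.mem_Icc.mp hwmem).1
      have hw2 : w ≤ M := (Finset.mem_Icc.mp hwmem).2
      refine ⟨w + 1, ?_, by omega⟩
      rw [Set.mem_setOf_eq, hpres (w + 1)]
      refine ⟨by omega, le_top, fun u hu _ => ?_⟩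
      simp only [Nat.add_sub_cancel]
      rcases le_or_gt u M with hcase | hcase
      · exact hwmax u (Finset.mem_Icc.mpr ⟨by omega, hcase⟩)
      · have hb := hbound u le_top
        have h2 : (α₂ - α₃) * (u : ℝ) ≤ (α₂ - α₃) * (M : ℝ) := by
          apply mul_le_mul_of_nonpos_left _ (by linarith)
          exact_mod_cast hcase.le
        have h3 : f (n + 1) ≤ f w :=
          hwmax (n + 1) (Finset.mem_Icc.mpr ⟨le_refl _, le_max_right _ _⟩)
        linarith
    · apply Set.infinite_of_forall_exists_gt
      intro n
      obtain ⟨c, hcmem, hcmin⟩ := Finset.exists_min_image (Finset.Icc 0 n) f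
        ⟨0, Finset.mem_Icc.mpr ⟨le_refl _, Nat.zero_le _⟩⟩
      obtain ⟨M0, hM0⟩ := exists_nat_gt (f c / (α₂ - α₃))
      set M := max M0 1 with hMdef
      have hM1 : (α₂ - α₃) * (M : ℝ) < f c := by
        have h1 : f c / (α₂ - α₃) < (M : ℝ) :=
          lt_of_lt_of_le hM0 (by exact_mod_cast le_max_left M0 1)
        rw [div_lt_iff_of_neg (by linarith)] at h1
        linarith
      have hMb : f M ≤ (α₂ - α₃) * (M : ℝ) := hbound M le_top
      obtain ⟨w, hwmem, hwmin⟩ := Finset.exists_min_image (Finset.Icc 0 M) f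
        ⟨0, Finset.mem_Icc.mpr ⟨le_refl _, Nat.zero_le _⟩⟩
      have hw2 : w ≤ M := (Finset.mem_Icc.mp hwmem).2
      have hwn : n < w := by
        by_contra hcon
        push_neg at hcon
        have h1 : f c ≤ f w := hcmin w (Finset.mem_Icc.mpr ⟨Nat.zero_le _, hcon⟩)
        have h2 : f w ≤ f M := hwmin M (Finset.mem_Icc.mpr ⟨Nat.zero_le _, le_refl _⟩)
        linarith
      refine ⟨w + 1, ?_, by omega⟩
      rw [Set.mem_setOf_eq, hrev (w + 1)]
      refine ⟨by omega, le_top, fun u hu => ?_⟩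
      simp only [Nat.add_sub_cancel] at hu ⊢
      exact hwmin u (Finset.mem_Icc.mpr ⟨Nat.zero_le _, by omega⟩)
end

section
/- There exist constants C ≥ 1, D ≥ 1 and β ≥ 1, depending only on r, such that the following holds. Assume F is η-homogeneous on Λ with rate λ, with universal smallness relations C·η^β < ε < δ and C·δ^{1/β} < 1, and set δ′ := δ^β/C. Let p₀ ∈ Λ be Pesin (L,ε)_v-regular along a direction E (the same statement holds with _h in place of _v throughout), and let n be an integer with n > −δ^{−1}·log_λ(C·L^D). If p_n := F^n(p₀) is (n, ∞)-times (1, δ′)_v-regular along E_{p_n} := DF^n(E), then p_n is Pesin (1,δ)_v-regular along E_{p_n}. Similarly, if p_{−n} := F^{−n}(p₀) is (∞, n)-times (1, δ′)_v-regular along E_{p_{−n}} := DF^{−n}(E), then p_{−n} is Pesin (1,δ)_v-regular along E_{p_{−n}}. -/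
open Real Function Set Filter MeasureTheory

noncomputable section

/-- The Euclidean plane `ℝ²` with the Euclidean norm. -/
abbrev E2 := EuclideanSpace ℝ (Fin 2)

/-- The Jacobian determinant of `F` at `p`. -/
def jacAt (F : E2 → E2) (p : E2) : ℝ :=
  LinearMap.det (fderiv ℝ F p).toLinearMap

/-- The angle between the directions (lines) spanned by the unit vectors `u` and `v`. -/
def lineAngle (u v : E2) : ℝ :=
  Real.arccos |(@inner ℝ E2 _ u v)|

/-- The unit vector spanning the image under `T` of the direction spanned by `v`. -/
def pushDir (T : E2 →L[ℝ] E2) (v : E2) : E2 :=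
  ‖T v‖⁻¹ • T v

/-- The `m`-th iterate (`m : ℤ`), computed using `F` forwards and its inverse `G` backwards. -/
def iterZ (F G : E2 → E2) (m : ℤ) : E2 → E2 :=
  if 0 ≤ m then F^[m.toNat] else G^[(-m).toNat]

/-- `p` is `N`-times forward `(L, ε)_v`-regular along the direction of the unit vector `v`:
`L⁻¹ λ^((1+ε)n) ≤ (Jac_p Fⁿ)^s / ‖D_pFⁿ|_E‖^(s-1) ≤ L λ^((1-ε)n)` for `s ∈ {-r, r-1}`,
`1 ≤ n ≤ N`. -/
def FwdRegV (F : E2 → E2) (p : E2) (lam L ε : ℝ) (r : ℕ) (N : ℕ∞) (v : E2) : Prop :=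
  ∀ n : ℕ, 1 ≤ n → (n : ℕ∞) ≤ N → ∀ s : ℤ, s = -(r : ℤ) ∨ s = (r : ℤ) - 1 →
    L⁻¹ * lam ^ ((1 + ε) * (n : ℝ)) ≤
        jacAt (F^[n]) p ^ s / ‖fderiv ℝ (F^[n]) p v‖ ^ (s - 1) ∧
      jacAt (F^[n]) p ^ s / ‖fderiv ℝ (F^[n]) p v‖ ^ (s - 1) ≤
        L * lam ^ ((1 - ε) * (n : ℝ))

/-- `p` is `N`-times forward `(L, ε)_h`-regular along the direction of the unit vector `v`:
`L⁻¹ λ^((1+ε)n) ≤ Jac_p Fⁿ / ‖D_pFⁿ|_E‖^(s+1) ≤ L λ^((1-ε)n)` for `s ∈ {-r+1, r}`,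
`1 ≤ n ≤ N`. -/
def FwdRegH (F : E2 → E2) (p : E2) (lam L ε : ℝ) (r : ℕ) (N : ℕ∞) (v : E2) : Prop :=
  ∀ n : ℕ, 1 ≤ n → (n : ℕ∞) ≤ N → ∀ s : ℤ, s = -(r : ℤ) + 1 ∨ s = (r : ℤ) →
    L⁻¹ * lam ^ ((1 + ε) * (n : ℝ)) ≤
        jacAt (F^[n]) p / ‖fderiv ℝ (F^[n]) p v‖ ^ (s + 1) ∧
      jacAt (F^[n]) p / ‖fderiv ℝ (F^[n]) p v‖ ^ (s + 1) ≤
        L * lam ^ ((1 - ε) * (n : ℝ))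

/-- `p` is `M`-times backward `(L, ε)_v`-regular along the direction of the unit vector `v`;
the backward iterates `F^(-n)` are given by the iterates of the inverse map `G`. -/
def BwdRegV (G : E2 → E2) (p : E2) (lam L ε : ℝ) (r : ℕ) (M : ℕ∞) (v : E2) : Prop :=
  ∀ n : ℕ, 1 ≤ n → (n : ℕ∞) ≤ M → ∀ s : ℤ, s = -(r : ℤ) ∨ s = (r : ℤ) - 1 →
    L⁻¹ * lam ^ (-(1 - ε) * (n : ℝ)) ≤
        jacAt (G^[n]) p ^ s / ‖fderiv ℝ (G^[n]) p v‖ ^ (s - 1) ∧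
      jacAt (G^[n]) p ^ s / ‖fderiv ℝ (G^[n]) p v‖ ^ (s - 1) ≤
        L * lam ^ (-(1 + ε) * (n : ℝ))

/-- `p` is `M`-times backward `(L, ε)_h`-regular along the direction of the unit vector `v`. -/
def BwdRegH (G : E2 → E2) (p : E2) (lam L ε : ℝ) (r : ℕ) (M : ℕ∞) (v : E2) : Prop :=
  ∀ n : ℕ, 1 ≤ n → (n : ℕ∞) ≤ M → ∀ s : ℤ, s = -(r : ℤ) + 1 ∨ s = (r : ℤ) →
    L⁻¹ * lam ^ (-(1 - ε) * (n : ℝ)) ≤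
        jacAt (G^[n]) p / ‖fderiv ℝ (G^[n]) p v‖ ^ (s + 1) ∧
      jacAt (G^[n]) p / ‖fderiv ℝ (G^[n]) p v‖ ^ (s + 1) ≤
        L * lam ^ (-(1 + ε) * (n : ℝ))

/-- `F` is `η`-homogeneous on `Λ` with rate `lam`. -/
def Homog (F : E2 → E2) (Λ : Set E2) (lam η : ℝ) : Prop :=
  ∀ p ∈ Λ,
    (∀ v : E2, ‖v‖ = 1 →
      lam ^ (1 + η) < ‖fderiv ℝ F p v‖ ∧ ‖fderiv ℝ F p v‖ < lam ^ (-η)) ∧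
    lam ^ (1 + η) < jacAt F p ∧ jacAt F p < lam ^ (1 - η)

/-- Simplified (homogeneous) forward `(L, δ)_v`-regularity:
`‖D_pFⁿ|_E‖ ≤ L λ^((1-δ)n)` for `1 ≤ n ≤ N`. -/
def SFwdV (F : E2 → E2) (p : E2) (lam L δ : ℝ) (N : ℕ∞) (v : E2) : Prop :=
  ∀ n : ℕ, 1 ≤ n → (n : ℕ∞) ≤ N →
    ‖fderiv ℝ (F^[n]) p v‖ ≤ L * lam ^ ((1 - δ) * (n : ℝ))

/-- Simplified (homogeneous) backward `(L, δ)_v`-regularity: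
`‖D_pF^(-n)|_E‖ ≥ L⁻¹ λ^(-(1-δ)n)` for `1 ≤ n ≤ M`. -/
def SBwdV (G : E2 → E2) (p : E2) (lam L δ : ℝ) (M : ℕ∞) (v : E2) : Prop :=
  ∀ n : ℕ, 1 ≤ n → (n : ℕ∞) ≤ M →
    L⁻¹ * lam ^ (-(1 - δ) * (n : ℝ)) ≤ ‖fderiv ℝ (G^[n]) p v‖

/-- Simplified (homogeneous) forward `(L, δ)_h`-regularity:
`‖D_pFⁿ|_E‖ ≥ L⁻¹ λ^(δn)` for `1 ≤ n ≤ N`. -/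
def SFwdH (F : E2 → E2) (p : E2) (lam L δ : ℝ) (N : ℕ∞) (v : E2) : Prop :=
  ∀ n : ℕ, 1 ≤ n → (n : ℕ∞) ≤ N →
    L⁻¹ * lam ^ (δ * (n : ℝ)) ≤ ‖fderiv ℝ (F^[n]) p v‖

/-- Simplified (homogeneous) backward `(L, δ)_h`-regularity:
`‖D_pF^(-n)|_E‖ ≤ L λ^(-δn)` for `1 ≤ n ≤ M`. -/
def SBwdH (G : E2 → E2) (p : E2) (lam L δ : ℝ) (M : ℕ∞) (v : E2) : Prop :=
  ∀ n : ℕ, 1 ≤ n → (n : ℕ∞) ≤ M →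
    ‖fderiv ℝ (G^[n]) p v‖ ≤ L * lam ^ (-δ * (n : ℝ))

set_option maxHeartbeats 1600000

/-- **Conditional Pliss moments along a Pesin-regular orbit.**
There are constants `C ≥ 1`, `D ≥ 1`, `β ≥ 1`, depending only on `r`, such that the
following holds. Assume `F` is `η`-homogeneous on `Λ` with rate `λ`, `C·η^β < ε < δ`,
`C·δ^(1/β) < 1`, and set `δ' := δ^β/C`. Let `p₀ ∈ Λ` be Pesin `(L,ε)_v`-regular along a
direction `E`, and let `n > -δ⁻¹·log_λ(C·L^D)`. If `p_n := Fⁿ(p₀)` is `(n,∞)`-times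
`(1,δ')_v`-regular along `E_{p_n} := DFⁿ(E)`, then `p_n` is Pesin `(1,δ)_v`-regular along
`E_{p_n}`; similarly, if `p_{-n} := F⁻ⁿ(p₀)` is `(∞,n)`-times `(1,δ')_v`-regular along
`E_{p_{-n}} := DF⁻ⁿ(E)`, then `p_{-n}` is Pesin `(1,δ)_v`-regular along `E_{p_{-n}}`.
The same statement holds with `h`-regularity in place of `v`-regularity throughout. -/
theorem conditional_pliss_full_orbit (r : ℕ) (hr : 2 ≤ r) :
    ∃ C D β : ℝ, 1 ≤ C ∧ 1 ≤ D ∧ 1 ≤ β ∧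
      ∀ (Ω : Set E2) (F G : E2 → E2) (Λ : Set E2) (lam η ε δ L : ℝ) (p₀ v : E2),
        IsOpen Ω → ContDiffOn ℝ r F Ω → Set.InjOn F Ω → Set.MapsTo F Ω Ω →
        (∀ x ∈ Ω, 0 < jacAt F x) →
        ContDiffOn ℝ r G (F '' Ω) → (∀ x ∈ Ω, G (F x) = x) → Set.MapsTo G Λ Λ →
        Λ ⊆ Ω → IsCompact Λ → F '' Λ = Λ →
        0 < lam → lam < 1 → 0 < η → Homog F Λ lam η →
        C * η ^ β < ε → ε < δ → C * δ ^ β⁻¹ < 1 → 1 ≤ L →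
        p₀ ∈ Λ → ‖v‖ = 1 →
        ((SFwdV F p₀ lam L ε ⊤ v ∧ SBwdV G p₀ lam L ε ⊤ v) →
          ∀ n : ℕ, -(Real.log (C * L ^ D) / Real.log lam) / δ < (n : ℝ) →
            ((SBwdV G (F^[n] p₀) lam 1 (δ ^ β / C) (n : ℕ∞)
                  (pushDir (fderiv ℝ (F^[n]) p₀) v) ∧
                SFwdV F (F^[n] p₀) lam 1 (δ ^ β / C) ⊤
                  (pushDir (fderiv ℝ (F^[n]) p₀) v) →
              SFwdV F (F^[n] p₀) lam 1 δ ⊤ (pushDir (fderiv ℝ (F^[n]) p₀) v) ∧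
                SBwdV G (F^[n] p₀) lam 1 δ ⊤ (pushDir (fderiv ℝ (F^[n]) p₀) v)) ∧
             (SBwdV G (G^[n] p₀) lam 1 (δ ^ β / C) ⊤
                  (pushDir (fderiv ℝ (G^[n]) p₀) v) ∧
                SFwdV F (G^[n] p₀) lam 1 (δ ^ β / C) (n : ℕ∞)
                  (pushDir (fderiv ℝ (G^[n]) p₀) v) →
              SFwdV F (G^[n] p₀) lam 1 δ ⊤ (pushDir (fderiv ℝ (G^[n]) p₀) v) ∧
                SBwdV G (G^[n] p₀) lam 1 δ ⊤ (pushDir (fderiv ℝ (G^[n]) p₀) v)))) ∧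
        ((SFwdH F p₀ lam L ε ⊤ v ∧ SBwdH G p₀ lam L ε ⊤ v) →
          ∀ n : ℕ, -(Real.log (C * L ^ D) / Real.log lam) / δ < (n : ℝ) →
            ((SBwdH G (F^[n] p₀) lam 1 (δ ^ β / C) (n : ℕ∞)
                  (pushDir (fderiv ℝ (F^[n]) p₀) v) ∧
                SFwdH F (F^[n] p₀) lam 1 (δ ^ β / C) ⊤
                  (pushDir (fderiv ℝ (F^[n]) p₀) v) →
              SFwdH F (F^[n] p₀) lam 1 δ ⊤ (pushDir (fderiv ℝ (F^[n]) p₀) v) ∧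
                SBwdH G (F^[n] p₀) lam 1 δ ⊤ (pushDir (fderiv ℝ (F^[n]) p₀) v)) ∧
             (SBwdH G (G^[n] p₀) lam 1 (δ ^ β / C) ⊤
                  (pushDir (fderiv ℝ (G^[n]) p₀) v) ∧
                SFwdH F (G^[n] p₀) lam 1 (δ ^ β / C) (n : ℕ∞)
                  (pushDir (fderiv ℝ (G^[n]) p₀) v) →
              SFwdH F (G^[n] p₀) lam 1 δ ⊤ (pushDir (fderiv ℝ (G^[n]) p₀) v) ∧
                SBwdH G (G^[n] p₀) lam 1 δ ⊤ (pushDir (fderiv ℝ (G^[n]) p₀) v)))) := by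
  classical
  refine ⟨2, 2, 1, one_le_two, one_le_two, le_refl 1, ?_⟩
  simp only [inv_one, Real.rpow_one]
  intro Ω F G Λ lam η ε δ L p₀ v hΩ hFc hFinj hFmapsΩ hjac hGc hGFid hGmapsΛ hΛsub hΛcomp
    himg hlam0 hlam1 hη0 hhom hCη hεδ hCδ hL hp₀ hv
  have hr1 : (1 : WithTop ℕ∞) ≤ (r : WithTop ℕ∞) := by exact_mod_cast Nat.one_le_of_lt hr
  have hL0 : (0:ℝ) < L := lt_of_lt_of_le one_pos hL
  have hε0 : 0 < ε := lt_trans (by positivity) hCη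
  have hδ0 : 0 < δ := hε0.trans hεδ
  have hloglam : Real.log lam < 0 := Real.log_neg hlam0 hlam1
  have hlogL : 0 ≤ Real.log L := Real.log_nonneg hL
  -- invariance facts
  have hFmem : ∀ p ∈ Λ, F p ∈ Λ := fun p hp => by
    rw [← himg]; exact Set.mem_image_of_mem F hp
  have hGmem : ∀ p ∈ Λ, G p ∈ Λ := fun p hp => hGmapsΛ hp
  have hFn : ∀ (k : ℕ), ∀ p ∈ Λ, F^[k] p ∈ Λ := by
    intro k; induction k with
    | zero => intro p hp; simpa using hp
    | succ k ih => intro p hp; rw [Function.iterate_succ_apply']; exact hFmem _ (ih p hp)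
  have hGn : ∀ (k : ℕ), ∀ p ∈ Λ, G^[k] p ∈ Λ := by
    intro k; induction k with
    | zero => intro p hp; simpa using hp
    | succ k ih => intro p hp; rw [Function.iterate_succ_apply']; exact hGmem _ (ih p hp)
  have hFGp : ∀ p ∈ Λ, F (G p) = p := by
    intro p hp
    rw [← himg] at hp
    obtain ⟨x, hx, rfl⟩ := hp
    rw [hGFid x (hΛsub hx)]
  have hGFn : ∀ (k : ℕ), ∀ p ∈ Λ, G^[k] (F^[k] p) = p := by
    intro k; induction k with
    | zero => intro p _; simp
    | succ k ih =>
      intro p hp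
      rw [Function.iterate_succ_apply' F, Function.iterate_succ_apply G,
        hGFid _ (hΛsub (hFn k p hp)), ih p hp]
  have hFGn : ∀ (k : ℕ), ∀ p ∈ Λ, F^[k] (G^[k] p) = p := by
    intro k; induction k with
    | zero => intro p _; simp
    | succ k ih =>
      intro p hp
      rw [Function.iterate_succ_apply' G, Function.iterate_succ_apply F,
        hFGp _ (hGn k p hp), ih p hp]
  -- `F '' Ω` is a neighborhood of each point of `Λ`
  have hnhds : ∀ p ∈ Λ, F '' Ω ∈ nhds p := by
    intro p hp
    rw [← himg] at hp
    obtain ⟨x, hxΛ, rfl⟩ := hp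
    have hxΩ : x ∈ Ω := hΛsub hxΛ
    have hcd : ContDiffAt ℝ r F x := hFc.contDiffAt (hΩ.mem_nhds hxΩ)
    have hsd : HasStrictFDerivAt F (fderiv ℝ F x) x := hcd.hasStrictFDerivAt (lt_of_lt_of_le zero_lt_one hr1).ne'
    have hdet : LinearMap.det (fderiv ℝ F x).toLinearMap ≠ 0 := (hjac x hxΩ).ne'
    let e : E2 ≃ₗ[ℝ] E2 := LinearMap.equivOfDetNeZero _ hdet
    let e' : E2 ≃L[ℝ] E2 := e.toContinuousLinearEquiv
    have he : (e' : E2 →L[ℝ] E2) = fderiv ℝ F x := by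
      refine ContinuousLinearMap.ext fun y => ?_
      show e y = fderiv ℝ F x y
      exact DFunLike.congr_fun (LinearEquiv.coe_ofIsUnitDet _) y
    have hsd' : HasStrictFDerivAt F (e' : E2 →L[ℝ] E2) x := by rw [he]; exact hsd
    have hmap : Filter.map F (nhds x) = nhds (F x) := hsd'.map_nhds_eq_of_equiv
    rw [← hmap]
    exact Filter.mem_map.2 (Filter.mem_of_superset (hΩ.mem_nhds hxΩ)
      (Set.subset_preimage_image F Ω))
  -- differentiability
  have hdF : ∀ p ∈ Λ, DifferentiableAt ℝ F p := fun p hp =>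
    (hFc.contDiffAt (hΩ.mem_nhds (hΛsub hp))).differentiableAt (lt_of_lt_of_le zero_lt_one hr1).ne'
  have hdG : ∀ p ∈ Λ, DifferentiableAt ℝ G p := fun p hp =>
    (hGc.contDiffAt (hnhds p hp)).differentiableAt (lt_of_lt_of_le zero_lt_one hr1).ne'
  have hdFn : ∀ (k : ℕ), ∀ p ∈ Λ, DifferentiableAt ℝ (F^[k]) p := by
    intro k; induction k with
    | zero => intro p _; simpa using differentiableAt_id'
    | succ k ih =>
      intro p hp
      rw [Function.iterate_succ]
      exact DifferentiableAt.comp p (ih (F p) (hFmem p hp)) (hdF p hp)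
  have hdGn : ∀ (k : ℕ), ∀ p ∈ Λ, DifferentiableAt ℝ (G^[k]) p := by
    intro k; induction k with
    | zero => intro p _; simpa using differentiableAt_id'
    | succ k ih =>
      intro p hp
      rw [Function.iterate_succ]
      exact DifferentiableAt.comp p (ih (G p) (hGmem p hp)) (hdG p hp)
  -- chain rules
  have hchF : ∀ (a b : ℕ), ∀ p ∈ Λ, ∀ w : E2,
      fderiv ℝ (F^[b+a]) p w = fderiv ℝ (F^[b]) (F^[a] p) (fderiv ℝ (F^[a]) p w) := by
    intro a b p hp w
    rw [Function.iterate_add F b a,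
      fderiv_comp p (hdFn b _ (hFn a p hp)) (hdFn a p hp)]
    rfl
  have hchG : ∀ (a b : ℕ), ∀ p ∈ Λ, ∀ w : E2,
      fderiv ℝ (G^[b+a]) p w = fderiv ℝ (G^[b]) (G^[a] p) (fderiv ℝ (G^[a]) p w) := by
    intro a b p hp w
    rw [Function.iterate_add G b a,
      fderiv_comp p (hdGn b _ (hGn a p hp)) (hdGn a p hp)]
    rfl
  -- one-step inverse derivatives
  have hDGF : ∀ p ∈ Λ, ∀ w : E2, fderiv ℝ G (F p) (fderiv ℝ F p w) = w := by
    intro p hp w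
    have hev : G ∘ F =ᶠ[nhds p] id :=
      Filter.eventuallyEq_of_mem (hΩ.mem_nhds (hΛsub hp)) (fun x hx => hGFid x hx)
    have h1 : fderiv ℝ (G ∘ F) p = fderiv ℝ (id : E2 → E2) p := hev.fderiv_eq
    rw [fderiv_comp p (hdG _ (hFmem p hp)) (hdF p hp), fderiv_id] at h1
    calc fderiv ℝ G (F p) (fderiv ℝ F p w)
        = ((fderiv ℝ G (F p)).comp (fderiv ℝ F p)) w := rfl
      _ = (ContinuousLinearMap.id ℝ E2) w := by rw [h1]
      _ = w := rfl
  have hDFG : ∀ p ∈ Λ, ∀ w : E2, fderiv ℝ F (G p) (fderiv ℝ G p w) = w := by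
    intro p hp w
    have hev : F ∘ G =ᶠ[nhds p] id :=
      Filter.eventuallyEq_of_mem (hnhds p hp) (fun y hy => by
        obtain ⟨x, hx, rfl⟩ := hy; show F (G (F x)) = F x; rw [hGFid x hx])
    have h1 : fderiv ℝ (F ∘ G) p = fderiv ℝ (id : E2 → E2) p := hev.fderiv_eq
    rw [fderiv_comp p (hdF _ (hGmem p hp)) (hdG p hp), fderiv_id] at h1
    calc fderiv ℝ F (G p) (fderiv ℝ G p w)
        = ((fderiv ℝ F (G p)).comp (fderiv ℝ G p)) w := rfl
      _ = (ContinuousLinearMap.id ℝ E2) w := by rw [h1]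
      _ = w := rfl
  -- iterated inverse derivatives
  have hDGFn : ∀ (k : ℕ), ∀ p ∈ Λ, ∀ w : E2,
      fderiv ℝ (G^[k]) (F^[k] p) (fderiv ℝ (F^[k]) p w) = w := by
    intro k; induction k with
    | zero => intro p _ w; simp
    | succ k ih =>
      intro p hp w
      have e1 : fderiv ℝ (F^[k+1]) p w
          = fderiv ℝ F (F^[k] p) (fderiv ℝ (F^[k]) p w) := by
        have := hchF k 1 p hp w
        rw [Nat.add_comm 1 k, Function.iterate_one] at this
        exact this
      have e2 : ∀ u : E2, fderiv ℝ (G^[k+1]) (F^[k+1] p) u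
          = fderiv ℝ (G^[k]) (G (F^[k+1] p)) (fderiv ℝ G (F^[k+1] p) u) := by
        intro u
        have := hchG 1 k (F^[k+1] p) (hFn (k+1) p hp) u
        rw [Function.iterate_one] at this
        exact this
      rw [e1, e2]
      have e3 : F^[k+1] p = F (F^[k] p) := Function.iterate_succ_apply' F k p
      rw [e3, hDGF _ (hFn k p hp), hGFid _ (hΛsub (hFn k p hp))]
      exact ih p hp w
  have hDFGn : ∀ (k : ℕ), ∀ p ∈ Λ, ∀ w : E2,
      fderiv ℝ (F^[k]) (G^[k] p) (fderiv ℝ (G^[k]) p w) = w := by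
    intro k; induction k with
    | zero => intro p _ w; simp
    | succ k ih =>
      intro p hp w
      have e1 : fderiv ℝ (G^[k+1]) p w
          = fderiv ℝ G (G^[k] p) (fderiv ℝ (G^[k]) p w) := by
        have := hchG k 1 p hp w
        rw [Nat.add_comm 1 k, Function.iterate_one] at this
        exact this
      have e2 : ∀ u : E2, fderiv ℝ (F^[k+1]) (G^[k+1] p) u
          = fderiv ℝ (F^[k]) (F (G^[k+1] p)) (fderiv ℝ F (G^[k+1] p) u) := by
        intro u
        have := hchF 1 k (G^[k+1] p) (hGn (k+1) p hp) u
        rw [Function.iterate_one] at this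
        exact this
      rw [e1, e2]
      have e3 : G^[k+1] p = G (G^[k] p) := Function.iterate_succ_apply' G k p
      rw [e3, hDFG _ (hGn k p hp), hFGp _ (hGn k p hp)]
      exact ih p hp w
  -- core exponent estimate
  have hcore : ∀ N K : ℕ, -(Real.log (2 * L ^ (2:ℝ)) / Real.log lam) / δ < (N:ℝ) →
      L ≤ lam ^ ((N:ℝ)*(δ/2-δ) + (K:ℝ)*(ε-δ)) := by
    intro N K hN
    rw [Real.le_rpow_iff_log_le hL0 hlam0]
    have hlog2 : Real.log (2 * L ^ (2:ℝ)) = Real.log 2 + 2 * Real.log L := by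
      rw [Real.log_mul two_ne_zero (by positivity), Real.log_rpow hL0]
    have h1 : Real.log (2 * L ^ (2:ℝ)) < (N:ℝ) * δ * (-Real.log lam) := by
      have h2 : -(Real.log (2 * L ^ (2:ℝ)) / Real.log lam) < (N:ℝ) * δ :=
        (div_lt_iff₀ hδ0).mp hN
      have h3 : -(Real.log (2 * L ^ (2:ℝ)) / Real.log lam)
          = Real.log (2 * L ^ (2:ℝ)) / (-Real.log lam) := by
        rw [div_neg]
      rw [h3, div_lt_iff₀ (by linarith)] at h2
      linarith
    rw [hlog2] at h1
    have hK : (0:ℝ) ≤ (K:ℝ) * (δ - ε) * (-Real.log lam) := by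
      have : (0:ℝ) ≤ (K:ℝ) := Nat.cast_nonneg K
      have : (0:ℝ) ≤ (K:ℝ) * (δ - ε) := mul_nonneg this (by linarith)
      exact mul_nonneg this (by linarith)
    have hlog2pos : 0 < Real.log 2 := Real.log_pos one_lt_two
    nlinarith [hK, hlog2pos, hlogL]
  have hrpos : ∀ x : ℝ, 0 < lam ^ x := fun x => Real.rpow_pos_of_pos hlam0 x
  -- the four combined estimates (N = time shift, K = extra steps)
  have hVF : ∀ N K : ℕ, -(Real.log (2 * L ^ (2:ℝ)) / Real.log lam) / δ < (N:ℝ) →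
      lam ^ ((1-δ/2)*(N:ℝ)) * (L * lam ^ ((1-ε)*(K:ℝ))) ≤ 1 * lam ^ ((1-δ)*((K:ℝ)+(N:ℝ))) := by
    intro N K hN
    rw [one_mul]
    calc lam ^ ((1-δ/2)*(N:ℝ)) * (L * lam ^ ((1-ε)*(K:ℝ)))
        = L * lam ^ ((1-δ/2)*(N:ℝ) + (1-ε)*(K:ℝ)) := by rw [Real.rpow_add hlam0]; ring
      _ ≤ lam ^ ((N:ℝ)*(δ/2-δ) + (K:ℝ)*(ε-δ)) * lam ^ ((1-δ/2)*(N:ℝ) + (1-ε)*(K:ℝ)) :=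
          mul_le_mul_of_nonneg_right (hcore N K hN) (hrpos _).le
      _ = lam ^ ((1-δ)*((K:ℝ)+(N:ℝ))) := by rw [← Real.rpow_add hlam0]; congr 1; ring
  have hVB : ∀ N K : ℕ, -(Real.log (2 * L ^ (2:ℝ)) / Real.log lam) / δ < (N:ℝ) →
      1⁻¹ * lam ^ (-(1-δ)*((K:ℝ)+(N:ℝ))) ≤
        lam ^ (-(1-δ/2)*(N:ℝ)) * (L⁻¹ * lam ^ (-(1-ε)*(K:ℝ))) := by
    intro N K hN
    rw [inv_one, one_mul]
    have h := mul_le_mul_of_nonneg_right (hcore N K hN) (hrpos (-(1-δ)*((K:ℝ)+(N:ℝ)))).le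
    rw [← Real.rpow_add hlam0] at h
    calc lam ^ (-(1-δ)*((K:ℝ)+(N:ℝ)))
        = L⁻¹ * (L * lam ^ (-(1-δ)*((K:ℝ)+(N:ℝ)))) := by
          rw [← mul_assoc, inv_mul_cancel₀ hL0.ne', one_mul]
      _ ≤ L⁻¹ * lam ^ ((N:ℝ)*(δ/2-δ) + (K:ℝ)*(ε-δ) + -(1-δ)*((K:ℝ)+(N:ℝ))) := by
          apply mul_le_mul_of_nonneg_left h (by positivity)
      _ = lam ^ (-(1-δ/2)*(N:ℝ)) * (L⁻¹ * lam ^ (-(1-ε)*(K:ℝ))) := by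
          rw [show (N:ℝ)*(δ/2-δ) + (K:ℝ)*(ε-δ) + -(1-δ)*((K:ℝ)+(N:ℝ))
            = -(1-δ/2)*(N:ℝ) + -(1-ε)*(K:ℝ) by ring, Real.rpow_add hlam0]
          ring
  have hHB : ∀ N K : ℕ, -(Real.log (2 * L ^ (2:ℝ)) / Real.log lam) / δ < (N:ℝ) →
      lam ^ (-(δ/2)*(N:ℝ)) * (L * lam ^ (-ε*(K:ℝ))) ≤ 1 * lam ^ (-δ*((K:ℝ)+(N:ℝ))) := by
    intro N K hN
    rw [one_mul]
    calc lam ^ (-(δ/2)*(N:ℝ)) * (L * lam ^ (-ε*(K:ℝ)))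
        = L * lam ^ (-(δ/2)*(N:ℝ) + -ε*(K:ℝ)) := by rw [Real.rpow_add hlam0]; ring
      _ ≤ lam ^ ((N:ℝ)*(δ/2-δ) + (K:ℝ)*(ε-δ)) * lam ^ (-(δ/2)*(N:ℝ) + -ε*(K:ℝ)) :=
          mul_le_mul_of_nonneg_right (hcore N K hN) (hrpos _).le
      _ = lam ^ (-δ*((K:ℝ)+(N:ℝ))) := by rw [← Real.rpow_add hlam0]; congr 1; ring
  have hHF : ∀ N K : ℕ, -(Real.log (2 * L ^ (2:ℝ)) / Real.log lam) / δ < (N:ℝ) →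
      1⁻¹ * lam ^ (δ*((K:ℝ)+(N:ℝ))) ≤ lam ^ ((δ/2)*(N:ℝ)) * (L⁻¹ * lam ^ (ε*(K:ℝ))) := by
    intro N K hN
    rw [inv_one, one_mul]
    have h := mul_le_mul_of_nonneg_right (hcore N K hN) (hrpos (δ*((K:ℝ)+(N:ℝ)))).le
    rw [← Real.rpow_add hlam0] at h
    calc lam ^ (δ*((K:ℝ)+(N:ℝ)))
        = L⁻¹ * (L * lam ^ (δ*((K:ℝ)+(N:ℝ)))) := by
          rw [← mul_assoc, inv_mul_cancel₀ hL0.ne', one_mul]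
      _ ≤ L⁻¹ * lam ^ ((N:ℝ)*(δ/2-δ) + (K:ℝ)*(ε-δ) + δ*((K:ℝ)+(N:ℝ))) := by
          apply mul_le_mul_of_nonneg_left h (by positivity)
      _ = lam ^ ((δ/2)*(N:ℝ)) * (L⁻¹ * lam ^ (ε*(K:ℝ))) := by
          rw [show (N:ℝ)*(δ/2-δ) + (K:ℝ)*(ε-δ) + δ*((K:ℝ)+(N:ℝ))
            = (δ/2)*(N:ℝ) + ε*(K:ℝ) by ring, Real.rpow_add hlam0]
          ring
  -- monotonicity in δ
  have hmFV : ∀ (p w : E2) (N : ℕ∞), SFwdV F p lam 1 (δ/2) N w → SFwdV F p lam 1 δ N w := by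
    intro p w N h m hm hmN
    refine (h m hm hmN).trans ?_
    simp only [one_mul]
    apply Real.rpow_le_rpow_of_exponent_ge hlam0 hlam1.le
    nlinarith [Nat.cast_nonneg (α := ℝ) m]
  have hmBV : ∀ (p w : E2) (N : ℕ∞), SBwdV G p lam 1 (δ/2) N w → SBwdV G p lam 1 δ N w := by
    intro p w N h m hm hmN
    refine le_trans ?_ (h m hm hmN)
    simp only [inv_one, one_mul]
    apply Real.rpow_le_rpow_of_exponent_ge hlam0 hlam1.le
    nlinarith [Nat.cast_nonneg (α := ℝ) m]
  have hmFH : ∀ (p w : E2) (N : ℕ∞), SFwdH F p lam 1 (δ/2) N w → SFwdH F p lam 1 δ N w := by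
    intro p w N h m hm hmN
    refine le_trans ?_ (h m hm hmN)
    simp only [inv_one, one_mul]
    apply Real.rpow_le_rpow_of_exponent_ge hlam0 hlam1.le
    nlinarith [Nat.cast_nonneg (α := ℝ) m]
  have hmBH : ∀ (p w : E2) (N : ℕ∞), SBwdH G p lam 1 (δ/2) N w → SBwdH G p lam 1 δ N w := by
    intro p w N h m hm hmN
    refine (h m hm hmN).trans ?_
    simp only [one_mul]
    apply Real.rpow_le_rpow_of_exponent_ge hlam0 hlam1.le
    nlinarith [Nat.cast_nonneg (α := ℝ) m]
  -- threshold forces n ≥ 1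
  have hthr : ∀ n : ℕ, -(Real.log (2 * L ^ (2:ℝ)) / Real.log lam) / δ < (n:ℝ) → 1 ≤ n := by
    intro n hn
    by_contra h
    have hn0 : n = 0 := by omega
    subst hn0
    have hL2 : (1:ℝ) < 2 * L ^ (2:ℝ) := by
      have h1 : (1:ℝ) ≤ L ^ (2:ℝ) := Real.one_le_rpow hL (by norm_num)
      linarith
    have h2 : 0 < Real.log (2 * L ^ (2:ℝ)) := Real.log_pos hL2
    have h3 : Real.log (2 * L ^ (2:ℝ)) / Real.log lam < 0 := div_neg_of_pos_of_neg h2 hloglam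
    have h4 : 0 < -(Real.log (2 * L ^ (2:ℝ)) / Real.log lam) / δ := div_pos (by linarith) hδ0
    simp only [Nat.cast_zero] at hn
    linarith
  -- norm factorization on the backward side at `F^[n] p₀`
  have hA : ∀ n k : ℕ,
      ‖fderiv ℝ (G^[k+n]) (F^[n] p₀) (pushDir (fderiv ℝ (F^[n]) p₀) v)‖
        = ‖fderiv ℝ (G^[n]) (F^[n] p₀) (pushDir (fderiv ℝ (F^[n]) p₀) v)‖
            * ‖fderiv ℝ (G^[k]) p₀ v‖ := by
    intro n k
    have hqΛ : F^[n] p₀ ∈ Λ := hFn n p₀ hp₀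
    have hGq : G^[n] (F^[n] p₀) = p₀ := hGFn n p₀ hp₀
    have hGu : fderiv ℝ (G^[n]) (F^[n] p₀) (fderiv ℝ (F^[n]) p₀ v) = v := hDGFn n p₀ hp₀ v
    have hpd : pushDir (fderiv ℝ (F^[n]) p₀) v
        = ‖fderiv ℝ (F^[n]) p₀ v‖⁻¹ • (fderiv ℝ (F^[n]) p₀ v) := rfl
    have h1 : fderiv ℝ (G^[n]) (F^[n] p₀) (pushDir (fderiv ℝ (F^[n]) p₀) v)
        = ‖fderiv ℝ (F^[n]) p₀ v‖⁻¹ • v := by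
      rw [hpd, _root_.map_smul, hGu]
    have h2 : fderiv ℝ (G^[k+n]) (F^[n] p₀) (pushDir (fderiv ℝ (F^[n]) p₀) v)
        = ‖fderiv ℝ (F^[n]) p₀ v‖⁻¹ • (fderiv ℝ (G^[k]) p₀ v) := by
      rw [hchG n k _ hqΛ, h1, hGq, _root_.map_smul]
    rw [h1, h2, norm_smul, norm_smul, hv]
    simp [abs_of_nonneg, mul_assoc]
  -- norm factorization on the forward side at `G^[n] p₀`
  have hB : ∀ n k : ℕ,
      ‖fderiv ℝ (F^[k+n]) (G^[n] p₀) (pushDir (fderiv ℝ (G^[n]) p₀) v)‖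
        = ‖fderiv ℝ (F^[n]) (G^[n] p₀) (pushDir (fderiv ℝ (G^[n]) p₀) v)‖
            * ‖fderiv ℝ (F^[k]) p₀ v‖ := by
    intro n k
    have hqΛ : G^[n] p₀ ∈ Λ := hGn n p₀ hp₀
    have hFq : F^[n] (G^[n] p₀) = p₀ := hFGn n p₀ hp₀
    have hFu : fderiv ℝ (F^[n]) (G^[n] p₀) (fderiv ℝ (G^[n]) p₀ v) = v := hDFGn n p₀ hp₀ v
    have hpd : pushDir (fderiv ℝ (G^[n]) p₀) v
        = ‖fderiv ℝ (G^[n]) p₀ v‖⁻¹ • (fderiv ℝ (G^[n]) p₀ v) := rfl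
    have h1 : fderiv ℝ (F^[n]) (G^[n] p₀) (pushDir (fderiv ℝ (G^[n]) p₀) v)
        = ‖fderiv ℝ (G^[n]) p₀ v‖⁻¹ • v := by
      rw [hpd, _root_.map_smul, hFu]
    have h2 : fderiv ℝ (F^[k+n]) (G^[n] p₀) (pushDir (fderiv ℝ (G^[n]) p₀) v)
        = ‖fderiv ℝ (G^[n]) p₀ v‖⁻¹ • (fderiv ℝ (F^[k]) p₀ v) := by
      rw [hchF n k _ hqΛ, h1, hFq, _root_.map_smul]
    rw [h1, h2, norm_smul, norm_smul, hv]
    simp [abs_of_nonneg, mul_assoc]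
  constructor
  · -- the `v`-regularity statement
    rintro ⟨hFp, hBp⟩ n hn
    have hn1 : 1 ≤ n := hthr n hn
    constructor
    · -- at `F^[n] p₀`
      rintro ⟨hB', hF'⟩
      refine ⟨hmFV _ _ _ hF', ?_⟩
      intro m hm _
      rcases le_or_gt m n with hmn | hmn
      · refine le_trans ?_ (hB' m hm (by exact_mod_cast hmn))
        simp only [inv_one, one_mul]
        apply Real.rpow_le_rpow_of_exponent_ge hlam0 hlam1.le
        nlinarith [Nat.cast_nonneg (α := ℝ) m]
      · obtain ⟨k, hk1, rfl⟩ : ∃ k, 1 ≤ k ∧ m = k + n := ⟨m - n, by omega, by omega⟩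
        rw [hA n k]
        have h1 := hB' n hn1 le_rfl
        simp only [inv_one, one_mul] at h1
        have h2 := hBp k hk1 le_top
        calc 1⁻¹ * lam ^ (-(1-δ) * ((k+n : ℕ):ℝ))
            = 1⁻¹ * lam ^ (-(1-δ) * ((k:ℝ)+(n:ℝ))) := by norm_cast
          _ ≤ lam ^ (-(1-δ/2)*(n:ℝ)) * (L⁻¹ * lam ^ (-(1-ε)*(k:ℝ))) := hVB n k hn
          _ ≤ _ := mul_le_mul h1 h2 (by positivity) (norm_nonneg _)
    · -- at `G^[n] p₀`
      rintro ⟨hB', hF'⟩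
      refine ⟨?_, hmBV _ _ _ hB'⟩
      intro m hm _
      rcases le_or_gt m n with hmn | hmn
      · refine le_trans (hF' m hm (by exact_mod_cast hmn)) ?_
        simp only [one_mul]
        apply Real.rpow_le_rpow_of_exponent_ge hlam0 hlam1.le
        nlinarith [Nat.cast_nonneg (α := ℝ) m]
      · obtain ⟨k, hk1, rfl⟩ : ∃ k, 1 ≤ k ∧ m = k + n := ⟨m - n, by omega, by omega⟩
        rw [hB n k]
        have h1 := hF' n hn1 le_rfl
        rw [one_mul] at h1
        have h2 := hFp k hk1 le_top
        calc ‖fderiv ℝ (F^[n]) (G^[n] p₀) (pushDir (fderiv ℝ (G^[n]) p₀) v)‖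
              * ‖fderiv ℝ (F^[k]) p₀ v‖
            ≤ lam ^ ((1-δ/2)*(n:ℝ)) * (L * lam ^ ((1-ε)*(k:ℝ))) :=
              mul_le_mul h1 h2 (norm_nonneg _) (hrpos _).le
          _ ≤ 1 * lam ^ ((1-δ)*((k:ℝ)+(n:ℝ))) := hVF n k hn
          _ = 1 * lam ^ ((1-δ)*((k+n : ℕ):ℝ)) := by norm_cast
  · -- the `h`-regularity statement
    rintro ⟨hFp, hBp⟩ n hn
    have hn1 : 1 ≤ n := hthr n hn
    constructor
    · -- at `F^[n] p₀`
      rintro ⟨hB', hF'⟩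
      refine ⟨hmFH _ _ _ hF', ?_⟩
      intro m hm _
      rcases le_or_gt m n with hmn | hmn
      · refine le_trans (hB' m hm (by exact_mod_cast hmn)) ?_
        simp only [one_mul]
        apply Real.rpow_le_rpow_of_exponent_ge hlam0 hlam1.le
        nlinarith [Nat.cast_nonneg (α := ℝ) m]
      · obtain ⟨k, hk1, rfl⟩ : ∃ k, 1 ≤ k ∧ m = k + n := ⟨m - n, by omega, by omega⟩
        rw [hA n k]
        have h1 := hB' n hn1 le_rfl
        rw [one_mul] at h1
        have h2 := hBp k hk1 le_top
        calc ‖fderiv ℝ (G^[n]) (F^[n] p₀) (pushDir (fderiv ℝ (F^[n]) p₀) v)‖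
              * ‖fderiv ℝ (G^[k]) p₀ v‖
            ≤ lam ^ (-(δ/2)*(n:ℝ)) * (L * lam ^ (-ε*(k:ℝ))) :=
              mul_le_mul h1 h2 (norm_nonneg _) (hrpos _).le
          _ ≤ 1 * lam ^ (-δ*((k:ℝ)+(n:ℝ))) := hHB n k hn
          _ = 1 * lam ^ (-δ*((k+n : ℕ):ℝ)) := by norm_cast
    · -- at `G^[n] p₀`
      rintro ⟨hB', hF'⟩
      refine ⟨?_, hmBH _ _ _ hB'⟩
      intro m hm _
      rcases le_or_gt m n with hmn | hmn
      · refine le_trans ?_ (hF' m hm (by exact_mod_cast hmn))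
        simp only [inv_one, one_mul]
        apply Real.rpow_le_rpow_of_exponent_ge hlam0 hlam1.le
        nlinarith [Nat.cast_nonneg (α := ℝ) m]
      · obtain ⟨k, hk1, rfl⟩ : ∃ k, 1 ≤ k ∧ m = k + n := ⟨m - n, by omega, by omega⟩
        rw [hB n k]
        have h1 := hF' n hn1 le_rfl
        simp only [inv_one, one_mul] at h1
        have h2 := hFp k hk1 le_top
        calc 1⁻¹ * lam ^ (δ * ((k+n : ℕ):ℝ))
            = 1⁻¹ * lam ^ (δ * ((k:ℝ)+(n:ℝ))) := by norm_cast
          _ ≤ lam ^ ((δ/2)*(n:ℝ)) * (L⁻¹ * lam ^ (ε*(k:ℝ))) := hHF n k hn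
          _ ≤ _ := mul_le_mul h1 h2 (by positivity) (norm_nonneg _)
end
end

section
/- There exist constants C ≥ 1 and β ∈ (0,1), depending only on r, such that the following holds. Let F be an orientation-preserving, dissipative C^r-diffeomorphism (r ≥ 2) from a domain Ω ⊆ ℝ² onto its image F(Ω) ⊆ Ω (dissipative meaning Jac_pF < 1 for all p ∈ Ω), let Λ ⊆ Ω be a compact totally invariant set, λ ∈ (0,1), and let ε ∈ (0,1) satisfy C·ε^β < 1. Suppose c₁ ∈ Λ is an ε-regular critical value: there is a direction E* at c₁ such that c₁ is ∞-times forward (1,ε)_v-regular along E* and ∞-times backward (1,ε)_h-regular along E*. Then c₁ is a general critical point of F, and for every m ∈ ℤ ∖ {0}, the point F^m(c₁) is not a general critical point; that is, c₁ is the unique general critical point in its orbit. -/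
open Real Function Set Filter MeasureTheory

noncomputable section

/-- `c` is a general critical point of `F` (with inverse `G`): there is a direction `E*`
at `c` with projective derivative `∂_ℙF^(±n)(E*) = Jac_c F^(±n)/‖D_cF^(±n)|_{E*}‖² ≥ 1`
for all `n ≥ 1`. -/
def GenCritPoint (F G : E2 → E2) (c : E2) : Prop :=
  ∃ v : E2, ‖v‖ = 1 ∧ ∀ n : ℕ, 1 ≤ n →
    1 ≤ jacAt (F^[n]) c / ‖fderiv ℝ (F^[n]) c v‖ ^ 2 ∧
    1 ≤ jacAt (G^[n]) c / ‖fderiv ℝ (G^[n]) c v‖ ^ 2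

/-! ### Auxiliary lemmas -/

/-- 2D wedge (cross) product of coordinates. -/
def wedge (u v : E2) : ℝ := u 0 * v 1 - u 1 * v 0

lemma norm_sq_E2 (u : E2) : ‖u‖^2 = u 0 ^2 + u 1 ^2 := by
  rw [EuclideanSpace.norm_eq, Real.sq_sqrt (by positivity)]
  simp [Fin.sum_univ_two, sq]

lemma abs_wedge_le (u v : E2) : |wedge u v| ≤ ‖u‖ * ‖v‖ := by
  have h1 : (wedge u v)^2 ≤ (‖u‖*‖v‖)^2 := by
    have h : (‖u‖*‖v‖)^2 = (u 0^2 + u 1^2) * (v 0^2 + v 1^2) := by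
      rw [mul_pow, norm_sq_E2, norm_sq_E2]
    rw [h, wedge]; nlinarith [sq_nonneg (u 0 * v 0 + u 1 * v 1)]
  have h2 : (0:ℝ) ≤ ‖u‖ * ‖v‖ := by positivity
  nlinarith [abs_nonneg (wedge u v), sq_abs (wedge u v)]

lemma wedge_eq_zero_imp (z v : E2) (hv : ‖v‖ = 1) (h : wedge z v = 0) :
    z = (z 0 * v 0 + z 1 * v 1) • v := by
  have hv2 : v 0 ^2 + v 1 ^2 = 1 := by rw [← norm_sq_E2, hv]; norm_num
  have hw : z 0 * v 1 = z 1 * v 0 := by rw [wedge] at h; linarith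
  ext i
  fin_cases i <;> simp [PiLp.smul_apply, smul_eq_mul]
  · linear_combination v 1 * hw - z 0 * hv2
  · linear_combination (- v 0) * hw - z 1 * hv2

lemma decomp_E2 (u : E2) :
    u = u 0 • (EuclideanSpace.basisFun (Fin 2) ℝ) 0 + u 1 • (EuclideanSpace.basisFun (Fin 2) ℝ) 1 := by
  ext i
  fin_cases i <;> simp [EuclideanSpace.basisFun_apply, EuclideanSpace.single_apply]

lemma wedge_map (T : E2 →L[ℝ] E2) (u v : E2) :
    wedge (T u) (T v) = LinearMap.det (T.toLinearMap) * wedge u v := by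
  set b := EuclideanSpace.basisFun (Fin 2) ℝ
  have hdet : LinearMap.det (T.toLinearMap) =
      T (b 0) 0 * T (b 1) 1 - T (b 0) 1 * T (b 1) 0 := by
    rw [← LinearMap.det_toMatrix b.toBasis, Matrix.det_fin_two]
    simp [b, LinearMap.toMatrix_apply, EuclideanSpace.basisFun_repr]; ring
  have hu : T u = u 0 • T (b 0) + u 1 • T (b 1) := by
    conv_lhs => rw [decomp_E2 u]
    simp [b, EuclideanSpace.basisFun_apply]
  have hvv : T v = v 0 • T (b 0) + v 1 • T (b 1) := by
    conv_lhs => rw [decomp_E2 v]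
    simp [b, EuclideanSpace.basisFun_apply]
  rw [hdet, wedge, wedge, hu, hvv]
  simp only [PiLp.add_apply, PiLp.smul_apply, smul_eq_mul]
  ring

lemma fwdDerive (R L α e t : ℝ) (hR : 2 ≤ R)
    (h1l : (1+e)*t ≤ (R-1)*L - (R-2)*α) (h1u : (R-1)*L - (R-2)*α ≤ (1-e)*t)
    (h2l : (1+e)*t ≤ -R*L + (R+1)*α) (h2u : -R*L + (R+1)*α ≤ (1-e)*t) :
    ((1+e)*t ≤ α ∧ α ≤ (1-e)*t) ∧ ((1+5*e)*t ≤ L ∧ L ≤ (1-5*e)*t) := by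
  have h2R : (0:ℝ) < 2*R - 1 := by linarith
  have e3 : 0 ≤ R * ((R-1)*L - (R-2)*α - (1+e)*t) := mul_nonneg (by linarith) (by linarith)
  have e4 : 0 ≤ (R-1) * (-R*L + (R+1)*α - (1+e)*t) := mul_nonneg (by linarith) (by linarith)
  have e5 : 0 ≤ R * ((1-e)*t - ((R-1)*L - (R-2)*α)) := mul_nonneg (by linarith) (by linarith)
  have e6 : 0 ≤ (R-1) * ((1-e)*t - (-R*L + (R+1)*α)) := mul_nonneg (by linarith) (by linarith)
  have hαl : (1+e)*t ≤ α := by nlinarith [e3, e4, h2R]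
  have hαu : α ≤ (1-e)*t := by nlinarith [e5, e6, h2R]
  refine ⟨⟨hαl, hαu⟩, ?_, ?_⟩ <;> nlinarith [hαl, hαu, h1l, h1u, h2l, h2u]

lemma bwdDerive (R K β e t : ℝ) (hR : 2 ≤ R) (ht : t ≤ 0) (he : 0 ≤ e)
    (h3l : -(1-e)*t ≤ K - (R+1)*β) (h3u : K - (R+1)*β ≤ -(1+e)*t)
    (h4l : -(1-e)*t ≤ K - (2-R)*β) (h4u : K - (2-R)*β ≤ -(1+e)*t) :
    (2*e*t ≤ β ∧ β ≤ -(2*e*t)) ∧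
      (-((1-(2*R+3)*e)*t) ≤ K ∧ K ≤ -((1+(2*R+3)*e)*t)) := by
  have hcl : 2*e*t ≤ (2*R-1)*β := by nlinarith [h4l, h3u]
  have hcu : (2*R-1)*β ≤ -(2*e*t) := by nlinarith [h4u, h3l]
  have hβl : 2*e*t ≤ β := by
    nlinarith [hcl, mul_nonneg (by linarith : (0:ℝ) ≤ 2*R-2)
      (mul_nonneg (mul_nonneg (by norm_num : (0:ℝ)≤2) he) (neg_nonneg.2 ht))]
  have hβu : β ≤ -(2*e*t) := by
    nlinarith [hcu, mul_nonneg (by linarith : (0:ℝ) ≤ 2*R-2)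
      (mul_nonneg (mul_nonneg (by norm_num : (0:ℝ)≤2) he) (neg_nonneg.2 ht))]
  refine ⟨⟨hβl, hβu⟩, ?_, ?_⟩ <;>
    nlinarith [hβl, hβu, h3l, h3u, mul_le_mul_of_nonneg_left hβl (by linarith : (0:ℝ) ≤ R+1),
      mul_le_mul_of_nonneg_left hβu (by linarith : (0:ℝ) ≤ R+1)]

lemma clm_ne_zero_of_det {T : E2 →L[ℝ] E2} (h : LinearMap.det T.toLinearMap ≠ 0)
    {z : E2} (hz : z ≠ 0) : T z ≠ 0 := by
  set e := LinearMap.equivOfDetNeZero T.toLinearMap h with hedef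
  have he : (e : E2 →ₗ[ℝ] E2) = T.toLinearMap := LinearEquiv.coe_ofIsUnitDet _
  intro h0
  apply hz
  have h1 : e z = 0 := by
    have h2 : (e : E2 →ₗ[ℝ] E2) z = T z := by rw [he]; rfl
    rw [show e z = (e : E2 →ₗ[ℝ] E2) z from rfl, h2, h0]
  simpa using e.injective (by simpa using h1)

lemma iter_diffAt {f : E2 → E2} {Λ : Set E2} (hmaps : MapsTo f Λ Λ)
    (hdiff : ∀ q ∈ Λ, DifferentiableAt ℝ f q) (n : ℕ) :
    ∀ p ∈ Λ, DifferentiableAt ℝ (f^[n]) p := by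
  induction n with
  | zero => intro p hp; simpa using differentiableAt_id'
  | succ n ih =>
    intro p hp
    rw [Function.iterate_succ]
    exact DifferentiableAt.comp p (ih (f p) (hmaps hp)) (hdiff p hp)

lemma fderiv_iter_add {f : E2 → E2} {Λ : Set E2} (hmaps : MapsTo f Λ Λ)
    (hdiff : ∀ q ∈ Λ, DifferentiableAt ℝ f q) (a b : ℕ) {p : E2} (hp : p ∈ Λ) :
    fderiv ℝ (f^[a+b]) p = (fderiv ℝ (f^[a]) (f^[b] p)).comp (fderiv ℝ (f^[b]) p) := by
  have h : f^[a+b] = f^[a] ∘ f^[b] := Function.iterate_add f a b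
  rw [h, fderiv_comp p (iter_diffAt hmaps hdiff a _ ((hmaps.iterate b) hp))
    (iter_diffAt hmaps hdiff b p hp)]

lemma jac_iter_add {f : E2 → E2} {Λ : Set E2} (hmaps : MapsTo f Λ Λ)
    (hdiff : ∀ q ∈ Λ, DifferentiableAt ℝ f q) (a b : ℕ) {p : E2} (hp : p ∈ Λ) :
    jacAt (f^[a+b]) p = jacAt (f^[a]) (f^[b] p) * jacAt (f^[b]) p := by
  unfold jacAt
  rw [fderiv_iter_add hmaps hdiff a b hp, ContinuousLinearMap.toLinearMap_comp, LinearMap.det_comp]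

lemma iterate_left_inv {f g : E2 → E2} {U : Set E2} (hfU : MapsTo f U U)
    (hg : ∀ x ∈ U, g (f x) = x) (n : ℕ) : ∀ x ∈ U, g^[n] (f^[n] x) = x := by
  induction n with
  | zero => simp
  | succ n ih =>
    intro x hx
    rw [Function.iterate_succ_apply' f, Function.iterate_succ_apply g,
      hg _ ((hfU.iterate n) hx)]
    exact ih x hx

open Topology in
lemma comp_fderiv_eq_id {f g : E2 → E2} {U : Set E2} (hU : IsOpen U) (hfU : MapsTo f U U)
    (hg : ∀ x ∈ U, g (f x) = x) {n : ℕ} {p : E2} (hp : p ∈ U)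
    (hdf : DifferentiableAt ℝ (f^[n]) p) (hdg : DifferentiableAt ℝ (g^[n]) (f^[n] p)) :
    (fderiv ℝ (g^[n]) (f^[n] p)).comp (fderiv ℝ (f^[n]) p) = ContinuousLinearMap.id ℝ E2 := by
  have hev : (g^[n] ∘ f^[n]) =ᶠ[𝓝 p] id := by
    filter_upwards [hU.mem_nhds hp] with x hx
    exact iterate_left_inv hfU hg n x hx
  calc (fderiv ℝ (g^[n]) (f^[n] p)).comp (fderiv ℝ (f^[n]) p)
      = fderiv ℝ (g^[n] ∘ f^[n]) p := (fderiv_comp p hdg hdf).symm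
    _ = fderiv ℝ (id : E2 → E2) p := hev.fderiv_eq
    _ = ContinuousLinearMap.id ℝ E2 := fderiv_id

open Topology in
lemma G_diffAt {Ω : Set E2} {F G : E2 → E2} {r : ℕ} (hr : 2 ≤ r) (hΩ : IsOpen Ω)
    (hF : ContDiffOn ℝ r F Ω) (hjac : ∀ x ∈ Ω, 0 < jacAt F x)
    (hGF : ∀ x ∈ Ω, G (F x) = x) {x : E2} (hx : x ∈ Ω) :
    DifferentiableAt ℝ G (F x) := by
  have hcd : ContDiffAt ℝ r F x := hF.contDiffAt (hΩ.mem_nhds hx)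
  have hstrict : HasStrictFDerivAt F (fderiv ℝ F x) x :=
    hcd.hasStrictFDerivAt (by exact_mod_cast (show r ≠ 0 by omega))
  have hdet : (fderiv ℝ F x).det ≠ 0 := by
    have := hjac x hx
    simp only [ContinuousLinearMap.det]
    exact ne_of_gt this
  set Φ := (fderiv ℝ F x).toContinuousLinearEquivOfDetNeZero hdet with hΦdef
  have hΦ : HasStrictFDerivAt F (Φ : E2 →L[ℝ] E2) x := by
    rwa [hΦdef, ContinuousLinearMap.coe_toContinuousLinearEquivOfDetNeZero]
  have hev : ∀ᶠ y in 𝓝 x, G (F y) = y := by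
    filter_upwards [hΩ.mem_nhds hx] with y hy using hGF y hy
  exact (hΦ.to_local_left_inverse hev).differentiableAt

lemma reg_to_logF {lam e J a : ℝ} {n : ℕ} (hlam0 : 0 < lam) (hJ : 0 < J) (ha : 0 < a) (s : ℤ)
    (h1 : (1:ℝ)⁻¹ * lam ^ ((1+e)*(n:ℝ)) ≤ J ^ s / a ^ (s-1))
    (h2 : J ^ s / a ^ (s-1) ≤ 1 * lam ^ ((1-e)*(n:ℝ))) :
    (1+e)*((n:ℝ)*Real.log lam) ≤ (s:ℝ)*Real.log J - ((s:ℝ)-1)*Real.log a ∧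
      (s:ℝ)*Real.log J - ((s:ℝ)-1)*Real.log a ≤ (1-e)*((n:ℝ)*Real.log lam) := by
  have hX : 0 < J ^ s / a ^ (s-1) := div_pos (zpow_pos hJ _) (zpow_pos ha _)
  have hlog : Real.log (J ^ s / a ^ (s-1)) = (s:ℝ)*Real.log J - ((s:ℝ)-1)*Real.log a := by
    rw [Real.log_div (zpow_ne_zero _ hJ.ne') (zpow_ne_zero _ ha.ne'), Real.log_zpow,
      Real.log_zpow]
    push_cast; ring
  constructor
  · have h1' : lam ^ ((1+e)*(n:ℝ)) ≤ J ^ s / a ^ (s-1) := by simpa using h1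
    have h3 := Real.log_le_log (Real.rpow_pos_of_pos hlam0 _) h1'
    rw [Real.log_rpow hlam0, hlog] at h3
    linarith
  · have h2' : J ^ s / a ^ (s-1) ≤ lam ^ ((1-e)*(n:ℝ)) := by simpa using h2
    have h3 := Real.log_le_log hX h2'
    rw [Real.log_rpow hlam0, hlog] at h3
    linarith

lemma reg_to_logB {lam e J a : ℝ} {n : ℕ} (hlam0 : 0 < lam) (hJ : 0 < J) (ha : 0 < a) (s : ℤ)
    (h1 : (1:ℝ)⁻¹ * lam ^ (-(1-e)*(n:ℝ)) ≤ J / a ^ (s+1))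
    (h2 : J / a ^ (s+1) ≤ 1 * lam ^ (-(1+e)*(n:ℝ))) :
    -(1-e)*((n:ℝ)*Real.log lam) ≤ Real.log J - ((s:ℝ)+1)*Real.log a ∧
      Real.log J - ((s:ℝ)+1)*Real.log a ≤ -(1+e)*((n:ℝ)*Real.log lam) := by
  have hX : 0 < J / a ^ (s+1) := div_pos hJ (zpow_pos ha _)
  have hlog : Real.log (J / a ^ (s+1)) = Real.log J - ((s:ℝ)+1)*Real.log a := by
    rw [Real.log_div hJ.ne' (zpow_ne_zero _ ha.ne'), Real.log_zpow]
    push_cast; ring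
  constructor
  · have h1' : lam ^ (-(1-e)*(n:ℝ)) ≤ J / a ^ (s+1) := by simpa using h1
    have h3 := Real.log_le_log (Real.rpow_pos_of_pos hlam0 _) h1'
    rw [Real.log_rpow hlam0, hlog] at h3
    linarith
  · have h2' : J / a ^ (s+1) ≤ lam ^ (-(1+e)*(n:ℝ)) := by simpa using h2
    have h3 := Real.log_le_log hX h2'
    rw [Real.log_rpow hlam0, hlog] at h3
    linarith

lemma crit_extract {J x : ℝ} (h : 1 ≤ J / x^2) : 0 < x^2 ∧ x^2 ≤ J := by
  rcases eq_or_ne x 0 with h0 | h0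
  · rw [h0] at h; simp at h; linarith
  · have hx2 : 0 < x^2 := by positivity
    exact ⟨hx2, by rwa [le_div_iff₀ hx2, one_mul] at h⟩

lemma exists_nat_mul_lt {X c : ℝ} (hc : c < 0) (k : ℕ) :
    ∃ n : ℕ, 1 ≤ n ∧ ((n + k : ℕ) : ℝ) * c < X := by
  obtain ⟨N, hN⟩ := exists_nat_gt (max (X / c) 0)
  refine ⟨N + 1, by omega, ?_⟩
  have hXc : X / c < (N:ℝ) := lt_of_le_of_lt (le_max_left _ 0) hN
  have h1 : (X / c) < ((N + 1 + k : ℕ) : ℝ) := by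
    push_cast
    have hk : (0:ℝ) ≤ (k:ℝ) := Nat.cast_nonneg k
    linarith
  calc ((N + 1 + k : ℕ) : ℝ) * c < (X / c) * c := mul_lt_mul_of_neg_right h1 hc
    _ = X := div_mul_cancel₀ X hc.ne

set_option maxHeartbeats 2000000 in
/-- **A regular critical value is the unique general critical point in its orbit.**
There are constants `C ≥ 1` and `β ∈ (0,1)`, depending only on `r`, such that the following
holds. Let `F` be an orientation-preserving, dissipative `C^r`-diffeomorphism (`r ≥ 2`) of a
domain `Ω ⊆ ℝ²` onto its image `F(Ω) ⊆ Ω`, with inverse `G`, let `Λ ⊆ Ω` be compact and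
totally invariant, `λ ∈ (0,1)`, and `ε ∈ (0,1)` with `C·ε^β < 1`. If `c₁ ∈ Λ` is an
`ε`-regular critical value (there is a direction `E*` along which `c₁` is `∞`-times forward
`(1,ε)_v`-regular and `∞`-times backward `(1,ε)_h`-regular), then `c₁` is a general critical
point of `F` and no other point `F^m(c₁)`, `m ≠ 0`, of its orbit is one. -/
theorem unique_general_critical_point_in_orbit (r : ℕ) (hr : 2 ≤ r) :
    ∃ C β : ℝ, 1 ≤ C ∧ 0 < β ∧ β < 1 ∧
      ∀ (Ω : Set E2) (F G : E2 → E2) (Λ : Set E2) (lam ε : ℝ) (c₁ : E2),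
        IsOpen Ω → ContDiffOn ℝ r F Ω → Set.InjOn F Ω → Set.MapsTo F Ω Ω →
        (∀ x ∈ Ω, 0 < jacAt F x) → (∀ x ∈ Ω, jacAt F x < 1) →
        ContDiffOn ℝ r G (F '' Ω) → (∀ x ∈ Ω, G (F x) = x) → Set.MapsTo G Λ Λ →
        Λ ⊆ Ω → IsCompact Λ → F '' Λ = Λ →
        0 < lam → lam < 1 → 0 < ε → ε < 1 → C * ε ^ β < 1 →
        c₁ ∈ Λ →
        (∃ v : E2, ‖v‖ = 1 ∧
          FwdRegV F c₁ lam 1 ε r ⊤ v ∧ BwdRegH G c₁ lam 1 ε r ⊤ v) →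
        GenCritPoint F G c₁ ∧
          ∀ m : ℤ, m ≠ 0 → ¬ GenCritPoint F G (iterZ F G m c₁) := by
  classical
  refine ⟨10*((r:ℝ)+1), 1/2, by have : (0:ℝ) ≤ (r:ℝ) := Nat.cast_nonneg r; linarith,
    by norm_num, by norm_num, ?_⟩
  intro Ω F G Λ lam ε c₁ hΩ hF hFinj hFmapsΩ hjpos hjlt hG hGF hGΛ hΛΩ hΛcpt hFΛ
    hlam0 hlam1 hε0 hε1 hCε hc₁ hreg
  obtain ⟨v, hv, hfwd, hbwd⟩ := hreg
  set R : ℝ := (r:ℝ) with hRdef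
  have hR : 2 ≤ R := by rw [hRdef]; exact_mod_cast hr
  -- ε is very small
  have hε2 : (10*(R+1))^2 * ε < 1 := by
    have ht : ε ^ ((1:ℝ)/2) * ε ^ ((1:ℝ)/2) = ε := by
      rw [← Real.rpow_add hε0]; norm_num
    have htpos : 0 < ε ^ ((1:ℝ)/2) := Real.rpow_pos_of_pos hε0 _
    have hC1 : (0:ℝ) < 10*(R+1) := by linarith
    nlinarith [hCε, htpos, ht, mul_pos hC1 htpos]
  have hεs : (2*R+7) * ε < 1 := by nlinarith [hε2, hε0, hR]
  have hε7 : 7 * ε < 1 := by nlinarith [hεs, hε0, hR]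
  set ℓ : ℝ := Real.log lam with hldef
  have hℓ : ℓ < 0 := Real.log_neg hlam0 hlam1
  -- basic structure facts
  have hvne : v ≠ 0 := by intro h; rw [h] at hv; simp at hv
  have hFmapsΛ : MapsTo F Λ Λ := fun p hp => hFΛ ▸ mem_image_of_mem F hp
  have hFdiffΛ : ∀ q ∈ Λ, DifferentiableAt ℝ F q := fun q hq =>
    (hF.contDiffAt (hΩ.mem_nhds (hΛΩ hq))).differentiableAt
      (by exact_mod_cast (show r ≠ 0 by omega))
  have hGdiffΛ : ∀ q ∈ Λ, DifferentiableAt ℝ G q := by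
    intro q hq
    rw [← hFΛ] at hq
    obtain ⟨x, hxΛ, rfl⟩ := hq
    exact G_diffAt hr hΩ hF hjpos hGF (hΛΩ hxΛ)
  have hFG : ∀ q ∈ Λ, F (G q) = q := by
    intro q hq
    rw [← hFΛ] at hq
    obtain ⟨x, hxΛ, rfl⟩ := hq
    rw [hGF x (hΛΩ hxΛ)]
  have hFnΛ : ∀ (n : ℕ), ∀ p ∈ Λ, F^[n] p ∈ Λ := fun n => (hFmapsΛ.iterate n)
  have hGnΛ : ∀ (n : ℕ), ∀ p ∈ Λ, G^[n] p ∈ Λ := fun n => (hGΛ.iterate n)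
  have hFitΛ := iter_diffAt hFmapsΛ hFdiffΛ
  have hGitΛ := iter_diffAt hGΛ hGdiffΛ
  have hGF_iter : ∀ (n : ℕ), ∀ x ∈ Ω, G^[n] (F^[n] x) = x := fun n =>
    iterate_left_inv hFmapsΩ hGF n
  have hFG_iter : ∀ (n : ℕ), ∀ q ∈ Λ, F^[n] (G^[n] q) = q := fun n =>
    iterate_left_inv hGΛ hFG n
  have hinvid : ∀ (n : ℕ), ∀ p ∈ Λ, (fderiv ℝ (G^[n]) (F^[n] p)).comp (fderiv ℝ (F^[n]) p)
      = ContinuousLinearMap.id ℝ E2 := fun n p hp =>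
    comp_fderiv_eq_id hΩ hFmapsΩ hGF (hΛΩ hp) (hFitΛ n p hp) (hGitΛ n _ (hFnΛ n p hp))
  have hJKid : ∀ (n : ℕ), ∀ p ∈ Λ, jacAt (G^[n]) (F^[n] p) * jacAt (F^[n]) p = 1 := by
    intro n p hp
    have h := congrArg (fun T : E2 →L[ℝ] E2 => LinearMap.det T.toLinearMap) (hinvid n p hp)
    simpa [jacAt, ContinuousLinearMap.coe_comp, LinearMap.det_comp,
      ContinuousLinearMap.coe_id, LinearMap.det_id] using h
  have hJpos : ∀ (n : ℕ), ∀ p ∈ Λ, 0 < jacAt (F^[n]) p := by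
    intro n
    induction n with
    | zero =>
      intro p hp
      simp only [Function.iterate_zero]
      unfold jacAt
      rw [show (fderiv ℝ (id : E2 → E2) p) = ContinuousLinearMap.id ℝ E2 from fderiv_id]
      simp
    | succ n ih =>
      intro p hp
      have h1 : n + 1 = 1 + n := by omega
      rw [h1, jac_iter_add hFmapsΛ hFdiffΛ 1 n hp]
      have h2 : jacAt (F^[1]) (F^[n] p) = jacAt F (F^[n] p) := by
        rw [Function.iterate_one]
      rw [h2]
      exact mul_pos (hjpos _ (hΛΩ (hFnΛ n p hp))) (ih p hp)
  have hFim : ∀ (n : ℕ), F^[n] '' Λ = Λ := by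
    intro n
    induction n with
    | zero => simp
    | succ n ih => rw [Function.iterate_succ, Set.image_comp, hFΛ, ih]
  have hKpos : ∀ (n : ℕ), ∀ q ∈ Λ, 0 < jacAt (G^[n]) q := by
    intro n q hq
    rw [← hFim n] at hq
    obtain ⟨x, hx, rfl⟩ := hq
    have h1 := hJKid n x hx
    nlinarith [hJpos n x hx]
  have hDFne : ∀ (n : ℕ), ∀ p ∈ Λ, ∀ z : E2, z ≠ 0 → fderiv ℝ (F^[n]) p z ≠ 0 :=
    fun n p hp z hz => clm_ne_zero_of_det (ne_of_gt (hJpos n p hp)) hz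
  have hDGne : ∀ (n : ℕ), ∀ q ∈ Λ, ∀ z : E2, z ≠ 0 → fderiv ℝ (G^[n]) q z ≠ 0 :=
    fun n q hq z hz => clm_ne_zero_of_det (ne_of_gt (hKpos n q hq)) hz
  -- positivity at c₁
  have hJc : ∀ n : ℕ, 0 < jacAt (F^[n]) c₁ := fun n => hJpos n c₁ hc₁
  have hKc : ∀ n : ℕ, 0 < jacAt (G^[n]) c₁ := fun n => hKpos n c₁ hc₁
  have hac : ∀ n : ℕ, 0 < ‖fderiv ℝ (F^[n]) c₁ v‖ :=
    fun n => norm_pos_iff.2 (hDFne n c₁ hc₁ v hvne)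
  have hbc : ∀ n : ℕ, 0 < ‖fderiv ℝ (G^[n]) c₁ v‖ :=
    fun n => norm_pos_iff.2 (hDGne n c₁ hc₁ v hvne)
  -- log bounds at c₁
  have hbounds : ∀ n : ℕ, 1 ≤ n →
      ((1+ε)*((n:ℝ)*ℓ) ≤ Real.log ‖fderiv ℝ (F^[n]) c₁ v‖ ∧
        Real.log ‖fderiv ℝ (F^[n]) c₁ v‖ ≤ (1-ε)*((n:ℝ)*ℓ)) ∧
      ((1+5*ε)*((n:ℝ)*ℓ) ≤ Real.log (jacAt (F^[n]) c₁) ∧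
        Real.log (jacAt (F^[n]) c₁) ≤ (1-5*ε)*((n:ℝ)*ℓ)) := by
    intro n hn
    have h1 := hfwd n hn le_top ((r:ℤ)-1) (Or.inr rfl)
    have h2 := hfwd n hn le_top (-(r:ℤ)) (Or.inl rfl)
    have g1 := reg_to_logF hlam0 (hJc n) (hac n) ((r:ℤ)-1) h1.1 h1.2
    have g2 := reg_to_logF hlam0 (hJc n) (hac n) (-(r:ℤ)) h2.1 h2.2
    push_cast at g1 g2
    exact fwdDerive R (Real.log (jacAt (F^[n]) c₁)) (Real.log ‖fderiv ℝ (F^[n]) c₁ v‖) ε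
      ((n:ℝ)*ℓ) hR (by linarith [g1.1]) (by linarith [g1.2]) (by linarith [g2.1])
      (by linarith [g2.2])
  have hbboundsPre : ∀ n : ℕ, 1 ≤ n →
      ((2*ε*((n:ℝ)*ℓ) ≤ Real.log ‖fderiv ℝ (G^[n]) c₁ v‖ ∧
        Real.log ‖fderiv ℝ (G^[n]) c₁ v‖ ≤ -(2*ε*((n:ℝ)*ℓ))) ∧
      (-((1-(2*R+3)*ε)*((n:ℝ)*ℓ)) ≤ Real.log (jacAt (G^[n]) c₁) ∧
        Real.log (jacAt (G^[n]) c₁) ≤ -((1+(2*R+3)*ε)*((n:ℝ)*ℓ)))) := by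
    intro n hn
    have h3 := hbwd n hn le_top (r:ℤ) (Or.inr rfl)
    have h4 := hbwd n hn le_top (-(r:ℤ)+1) (Or.inl rfl)
    have g3 := reg_to_logB hlam0 (hKc n) (hbc n) (r:ℤ) h3.1 h3.2
    have g4 := reg_to_logB hlam0 (hKc n) (hbc n) (-(r:ℤ)+1) h4.1 h4.2
    push_cast at g3 g4
    have hnl : (n:ℝ)*ℓ ≤ 0 := by
      have : (0:ℝ) ≤ (n:ℝ) := Nat.cast_nonneg n
      nlinarith
    exact bwdDerive R (Real.log (jacAt (G^[n]) c₁)) (Real.log ‖fderiv ℝ (G^[n]) c₁ v‖) ε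
      ((n:ℝ)*ℓ) hR hnl hε0.le (by linarith [g3.1]) (by linarith [g3.2]) (by linarith [g4.1])
      (by linarith [g4.2])
  have hnlneg : ∀ n : ℕ, 1 ≤ n → (n:ℝ)*ℓ < 0 := by
    intro n hn
    have h1 : (1:ℝ) ≤ (n:ℝ) := by exact_mod_cast hn
    nlinarith
  -- c₁ is a general critical point
  have hcrit₁ : GenCritPoint F G c₁ := by
    refine ⟨v, hv, fun n hn => ⟨?_, ?_⟩⟩
    · have hb := hbounds n hn
      have hfc : 2 * Real.log ‖fderiv ℝ (F^[n]) c₁ v‖ ≤ Real.log (jacAt (F^[n]) c₁) := by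
        linarith [hb.1.2, hb.2.1,
          mul_nonneg (by linarith : (0:ℝ) ≤ 1-7*ε) (by linarith [hnlneg n hn] : (0:ℝ) ≤ -((n:ℝ)*ℓ))]
      have h2 : ‖fderiv ℝ (F^[n]) c₁ v‖^2 ≤ jacAt (F^[n]) c₁ := by
        rw [← Real.exp_log (pow_pos (hac n) 2),
          ← Real.exp_log (hJc n)]
        apply Real.exp_le_exp.2
        rw [Real.log_pow]
        push_cast
        linarith
      rw [le_div_iff₀ (pow_pos (hac n) 2), one_mul]
      exact h2
    · have hb := hbboundsPre n hn
      have hbc2 : 2 * Real.log ‖fderiv ℝ (G^[n]) c₁ v‖ ≤ Real.log (jacAt (G^[n]) c₁) := by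
        linarith [hb.1.2, hb.2.1,
          mul_nonneg (by linarith [hεs] : (0:ℝ) ≤ 1-(2*R+7)*ε) (by linarith [hnlneg n hn] : (0:ℝ) ≤ -((n:ℝ)*ℓ))]
      have h2 : ‖fderiv ℝ (G^[n]) c₁ v‖^2 ≤ jacAt (G^[n]) c₁ := by
        rw [← Real.exp_log (pow_pos (hbc n) 2),
          ← Real.exp_log (hKc n)]
        apply Real.exp_le_exp.2
        rw [Real.log_pow]
        push_cast
        linarith
      rw [le_div_iff₀ (pow_pos (hbc n) 2), one_mul]
      exact h2
  refine ⟨hcrit₁, ?_⟩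
  intro m hm hcontra
  obtain ⟨w, hw, hcw⟩ := hcontra
  have hwne : w ≠ 0 := by intro h; rw [h] at hw; simp at hw
  rcases le_or_gt 0 m with hm0 | hm0
  · -- m > 0 : forward iterate
    set k : ℕ := m.toNat with hkdef
    have hk1 : 1 ≤ k := by omega
    have hiter : iterZ F G m c₁ = F^[k] c₁ := by
      unfold iterZ; rw [if_pos hm0]
    rw [hiter] at hcw
    have hpΛ : F^[k] c₁ ∈ Λ := hFnΛ k c₁ hc₁
    -- criticality inequalities at p
    have hfc : ∀ n : ℕ, 1 ≤ n →
        ‖fderiv ℝ (F^[n]) (F^[k] c₁) w‖^2 ≤ jacAt (F^[n]) (F^[k] c₁) :=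
      fun n hn => (crit_extract (hcw n hn).1).2
    have hbcp : ∀ n : ℕ, 1 ≤ n →
        ‖fderiv ℝ (G^[n]) (F^[k] c₁) w‖^2 ≤ jacAt (G^[n]) (F^[k] c₁) :=
      fun n hn => (crit_extract (hcw n hn).2).2
    -- the pulled-back vector z at c₁
    set z : E2 := fderiv ℝ (G^[k]) (F^[k] c₁) w with hzdef
    have hzne : z ≠ 0 := hDGne k _ hpΛ w hwne
    have hABz : ∀ u : E2, fderiv ℝ (G^[k]) (F^[k] c₁) (fderiv ℝ (F^[k]) c₁ u) = u := by
      intro u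
      have h := congrArg (fun T : E2 →L[ℝ] E2 => T u) (hinvid k c₁ hc₁)
      simpa using h
    have hBz : fderiv ℝ (F^[k]) c₁ z = w := by
      have h2 : fderiv ℝ (G^[k]) (F^[k] c₁) (fderiv ℝ (F^[k]) c₁ z - w) = 0 := by
        rw [map_sub, hABz z, hzdef]
        simp
      by_contra hne
      exact (hDGne k _ hpΛ _ (sub_ne_zero.2 hne)) h2
    -- vector cocycle
    have hvec : ∀ n : ℕ, fderiv ℝ (F^[n+k]) c₁ z = fderiv ℝ (F^[n]) (F^[k] c₁) w := by
      intro n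
      rw [fderiv_iter_add hFmapsΛ hFdiffΛ n k hc₁]
      simp [hBz]
    -- jacobian cocycle
    have hjsplit : ∀ n : ℕ, jacAt (F^[n+k]) c₁ = jacAt (F^[n]) (F^[k] c₁) * jacAt (F^[k]) c₁ :=
      fun n => jac_iter_add hFmapsΛ hFdiffΛ n k hc₁
    have hJnp : ∀ n : ℕ, 0 < jacAt (F^[n]) (F^[k] c₁) := fun n => hJpos n _ hpΛ
    -- z is parallel to v
    have hW0 : wedge z v = 0 := by
      by_contra hWne
      have hWpos : 0 < |wedge z v| := abs_pos.2 hWne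
      have key : ∀ n : ℕ, 1 ≤ n → Real.log |wedge z v| ≤
          ((n+k:ℕ):ℝ)*ℓ*((1-7*ε)/2) - Real.log (jacAt (F^[k]) c₁)/2 := by
        intro n hn
        have hj1 : 1 ≤ n + k := by omega
        have hDzpos : 0 < ‖fderiv ℝ (F^[n+k]) c₁ z‖ :=
          norm_pos_iff.2 (hDFne (n+k) c₁ hc₁ z hzne)
        have habs := abs_wedge_le (fderiv ℝ (F^[n+k]) c₁ z) (fderiv ℝ (F^[n+k]) c₁ v)
        have hdeteq : LinearMap.det (fderiv ℝ (F^[n+k]) c₁).toLinearMap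
            = jacAt (F^[n+k]) c₁ := rfl
        rw [wedge_map, hdeteq, abs_mul, abs_of_pos (hJc (n+k))] at habs
        have hW2 : |wedge z v| ≤ ‖fderiv ℝ (F^[n+k]) c₁ z‖ * ‖fderiv ℝ (F^[n+k]) c₁ v‖
            / jacAt (F^[n+k]) c₁ := by
          rw [le_div_iff₀ (hJc (n+k))]
          nlinarith [habs]
        have hlogW := Real.log_le_log hWpos hW2
        rw [Real.log_div (mul_pos hDzpos (hac (n+k))).ne' (hJc (n+k)).ne',
          Real.log_mul hDzpos.ne' (hac (n+k)).ne'] at hlogW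
        -- squared bound on ‖D z‖
        have hsq : ‖fderiv ℝ (F^[n+k]) c₁ z‖^2 ≤ jacAt (F^[n]) (F^[k] c₁) := by
          rw [hvec n]; exact hfc n hn
        have hlsq : 2 * Real.log ‖fderiv ℝ (F^[n+k]) c₁ z‖ ≤
            Real.log (jacAt (F^[n+k]) c₁) - Real.log (jacAt (F^[k]) c₁) := by
          have h3 := Real.log_le_log (pow_pos hDzpos 2) hsq
          rw [Real.log_pow] at h3
          have h5 : Real.log (jacAt (F^[n+k]) c₁) =
              Real.log (jacAt (F^[n]) (F^[k] c₁)) + Real.log (jacAt (F^[k]) c₁) := by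
            rw [hjsplit n, Real.log_mul (hJnp n).ne' (hJc k).ne']
          push_cast at h3
          linarith
        have hb := hbounds (n+k) hj1
        push_cast at hb ⊢
        linarith [hb.1.2, hb.2.1, hlogW, hlsq]
      -- contradiction by letting n → ∞
      have hcneg : ℓ*((1-7*ε)/2) < 0 := by nlinarith [hε7, hℓ]
      obtain ⟨n, hn1, hnlt⟩ := exists_nat_mul_lt (X := Real.log |wedge z v| +
        Real.log (jacAt (F^[k]) c₁)/2) hcneg k
      have := key n hn1
      push_cast at this hnlt
      nlinarith [this, hnlt]
    -- conclude z = c • v and derive numeric contradiction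
    have hzv : z = (z 0 * v 0 + z 1 * v 1) • v := wedge_eq_zero_imp z v hv hW0
    set c : ℝ := z 0 * v 0 + z 1 * v 1 with hcdef
    have hcne : c ≠ 0 := by
      intro h0
      apply hzne
      rw [hzv, h0, zero_smul]
    have hnz : ‖z‖ = |c| := by rw [hzv, norm_smul, hv, mul_one]; rfl
    have hwBv : w = c • fderiv ℝ (F^[k]) c₁ v := by
      rw [← hBz, hzv, _root_.map_smul]
    have hak : |c| * ‖fderiv ℝ (F^[k]) c₁ v‖ = 1 := by
      have := congrArg norm hwBv
      rw [hw, norm_smul] at this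
      exact this.symm
    -- backward criticality at n = k
    have hzk : fderiv ℝ (G^[k]) (F^[k] c₁) w = z := rfl
    have hsqb : ‖z‖^2 ≤ jacAt (G^[k]) (F^[k] c₁) := by
      rw [← hzk]; exact hbcp k hk1
    have hKJ : jacAt (G^[k]) (F^[k] c₁) * jacAt (F^[k]) c₁ = 1 := hJKid k c₁ hc₁
    -- |c|^2 * J_k ≤ 1  and |c| = 1/a_k  give  J_k ≤ a_k^2
    have hJle : jacAt (F^[k]) c₁ ≤ ‖fderiv ℝ (F^[k]) c₁ v‖^2 := by
      have h1 : ‖z‖^2 * jacAt (F^[k]) c₁ ≤ 1 := by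
        calc ‖z‖^2 * jacAt (F^[k]) c₁ ≤ jacAt (G^[k]) (F^[k] c₁) * jacAt (F^[k]) c₁ :=
              mul_le_mul_of_nonneg_right hsqb (hJc k).le
          _ = 1 := hKJ
      have h2 : |c| = (‖fderiv ℝ (F^[k]) c₁ v‖)⁻¹ := eq_inv_of_mul_eq_one_left hak
      rw [hnz, h2] at h1
      have h3 := hac k
      rw [inv_pow] at h1
      rw [inv_mul_le_iff₀ (by positivity)] at h1
      linarith [h1]
    -- log contradiction
    have hlog := Real.log_le_log (hJc k) hJle
    rw [Real.log_pow] at hlog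
    have hb := hbounds k hk1
    push_cast at hlog
    nlinarith [hb.1.2, hb.2.1, hlog, hnlneg k hk1, hε7, hε0,
      mul_pos (show (0:ℝ) < 1-7*ε by linarith) (show (0:ℝ) < -((k:ℝ)*ℓ) by linarith [hnlneg k hk1])]
  · -- m < 0 : backward iterate
    set k : ℕ := (-m).toNat with hkdef
    have hk1 : 1 ≤ k := by omega
    have hiter : iterZ F G m c₁ = G^[k] c₁ := by
      unfold iterZ; rw [if_neg (by omega)]
    rw [hiter] at hcw
    have hpΛ : G^[k] c₁ ∈ Λ := hGnΛ k c₁ hc₁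
    have hFkp : F^[k] (G^[k] c₁) = c₁ := hFG_iter k c₁ hc₁
    -- criticality inequalities at p
    have hfcp : ∀ n : ℕ, 1 ≤ n →
        ‖fderiv ℝ (F^[n]) (G^[k] c₁) w‖^2 ≤ jacAt (F^[n]) (G^[k] c₁) :=
      fun n hn => (crit_extract (hcw n hn).1).2
    have hbcp : ∀ n : ℕ, 1 ≤ n →
        ‖fderiv ℝ (G^[n]) (G^[k] c₁) w‖^2 ≤ jacAt (G^[n]) (G^[k] c₁) :=
      fun n hn => (crit_extract (hcw n hn).2).2
    -- the pushed-forward vector z at c₁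
    set z : E2 := fderiv ℝ (F^[k]) (G^[k] c₁) w with hzdef
    have hzne : z ≠ 0 := hDFne k _ hpΛ w hwne
    have hAz : fderiv ℝ (G^[k]) c₁ z = w := by
      have h := congrArg (fun T : E2 →L[ℝ] E2 => T w) (hinvid k (G^[k] c₁) hpΛ)
      rw [hFkp] at h
      simpa using h
    -- vector cocycle for G at c₁
    have hvec : ∀ n : ℕ, fderiv ℝ (G^[n+k]) c₁ z = fderiv ℝ (G^[n]) (G^[k] c₁) w := by
      intro n
      rw [fderiv_iter_add hGΛ hGdiffΛ n k hc₁]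
      simp [hAz]
    -- jacobian cocycle for G at c₁
    have hjsplit : ∀ n : ℕ, jacAt (G^[n+k]) c₁ = jacAt (G^[n]) (G^[k] c₁) * jacAt (G^[k]) c₁ :=
      fun n => jac_iter_add hGΛ hGdiffΛ n k hc₁
    have hKnp : ∀ n : ℕ, 0 < jacAt (G^[n]) (G^[k] c₁) := fun n => hKpos n _ hpΛ
    -- z is parallel to v
    have hW0 : wedge z v = 0 := by
      by_contra hWne
      have hWpos : 0 < |wedge z v| := abs_pos.2 hWne
      have key : ∀ n : ℕ, 1 ≤ n → Real.log |wedge z v| ≤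
          ((n+k:ℕ):ℝ)*ℓ*((1-(2*R+7)*ε)/2) - Real.log (jacAt (G^[k]) c₁)/2 := by
        intro n hn
        have hj1 : 1 ≤ n + k := by omega
        have hDzpos : 0 < ‖fderiv ℝ (G^[n+k]) c₁ z‖ :=
          norm_pos_iff.2 (hDGne (n+k) c₁ hc₁ z hzne)
        have habs := abs_wedge_le (fderiv ℝ (G^[n+k]) c₁ z) (fderiv ℝ (G^[n+k]) c₁ v)
        have hdeteq : LinearMap.det (fderiv ℝ (G^[n+k]) c₁).toLinearMap
            = jacAt (G^[n+k]) c₁ := rfl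
        rw [wedge_map, hdeteq, abs_mul, abs_of_pos (hKc (n+k))] at habs
        have hW2 : |wedge z v| ≤ ‖fderiv ℝ (G^[n+k]) c₁ z‖ * ‖fderiv ℝ (G^[n+k]) c₁ v‖
            / jacAt (G^[n+k]) c₁ := by
          rw [le_div_iff₀ (hKc (n+k))]
          nlinarith [habs]
        have hlogW := Real.log_le_log hWpos hW2
        rw [Real.log_div (mul_pos hDzpos (hbc (n+k))).ne' (hKc (n+k)).ne',
          Real.log_mul hDzpos.ne' (hbc (n+k)).ne'] at hlogW
        have hsq : ‖fderiv ℝ (G^[n+k]) c₁ z‖^2 ≤ jacAt (G^[n]) (G^[k] c₁) := by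
          rw [hvec n]; exact hbcp n hn
        have hlsq : 2 * Real.log ‖fderiv ℝ (G^[n+k]) c₁ z‖ ≤
            Real.log (jacAt (G^[n+k]) c₁) - Real.log (jacAt (G^[k]) c₁) := by
          have h3 := Real.log_le_log (pow_pos hDzpos 2) hsq
          rw [Real.log_pow] at h3
          have h5 : Real.log (jacAt (G^[n+k]) c₁) =
              Real.log (jacAt (G^[n]) (G^[k] c₁)) + Real.log (jacAt (G^[k]) c₁) := by
            rw [hjsplit n, Real.log_mul (hKnp n).ne' (hKc k).ne']
          push_cast at h3
          linarith
        have hb := hbboundsPre (n+k) hj1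
        push_cast at hb ⊢
        linarith [hb.1.2, hb.2.1, hlogW, hlsq]
      have hcneg : ℓ*((1-(2*R+7)*ε)/2) < 0 := by nlinarith [hεs, hℓ]
      obtain ⟨n, hn1, hnlt⟩ := exists_nat_mul_lt (X := Real.log |wedge z v| +
        Real.log (jacAt (G^[k]) c₁)/2) hcneg k
      have := key n hn1
      push_cast at this hnlt
      nlinarith [this, hnlt]
    -- conclude z = c • v and derive numeric contradiction
    have hzv : z = (z 0 * v 0 + z 1 * v 1) • v := wedge_eq_zero_imp z v hv hW0
    set c : ℝ := z 0 * v 0 + z 1 * v 1 with hcdef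
    have hcne : c ≠ 0 := by
      intro h0
      apply hzne
      rw [hzv, h0, zero_smul]
    have hnz : ‖z‖ = |c| := by rw [hzv, norm_smul, hv, mul_one]; rfl
    have hwAv : w = c • fderiv ℝ (G^[k]) c₁ v := by
      rw [← hAz, hzv, _root_.map_smul]
    have hbk : |c| * ‖fderiv ℝ (G^[k]) c₁ v‖ = 1 := by
      have := congrArg norm hwAv
      rw [hw, norm_smul] at this
      exact this.symm
    -- forward criticality at n = k
    have hzk : fderiv ℝ (F^[k]) (G^[k] c₁) w = z := rfl
    have hsqf : ‖z‖^2 ≤ jacAt (F^[k]) (G^[k] c₁) := by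
      rw [← hzk]; exact hfcp k hk1
    have hKJ : jacAt (G^[k]) c₁ * jacAt (F^[k]) (G^[k] c₁) = 1 := by
      have h := hJKid k (G^[k] c₁) hpΛ
      rwa [hFkp] at h
    have hJle : jacAt (G^[k]) c₁ ≤ ‖fderiv ℝ (G^[k]) c₁ v‖^2 := by
      have h1 : ‖z‖^2 * jacAt (G^[k]) c₁ ≤ 1 := by
        calc ‖z‖^2 * jacAt (G^[k]) c₁ ≤ jacAt (F^[k]) (G^[k] c₁) * jacAt (G^[k]) c₁ :=
              mul_le_mul_of_nonneg_right hsqf (hKc k).le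
          _ = 1 := by rw [mul_comm]; exact hKJ
      have h2 : |c| = (‖fderiv ℝ (G^[k]) c₁ v‖)⁻¹ := eq_inv_of_mul_eq_one_left hbk
      rw [hnz, h2] at h1
      rw [inv_pow] at h1
      rw [inv_mul_le_iff₀ (pow_pos (hbc k) 2)] at h1
      linarith [h1]
    -- log contradiction: Kf k ≤ 2 Bf k is impossible
    have hlog := Real.log_le_log (hKc k) hJle
    rw [Real.log_pow] at hlog
    have hb := hbboundsPre k hk1
    push_cast at hlog
    nlinarith [hb.1.2, hb.2.1, hlog, hnlneg k hk1, hεs, hε0,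
      mul_pos (show (0:ℝ) < 1-(2*R+7)*ε by linarith)
        (show (0:ℝ) < -((k:ℝ)*ℓ) by linarith [hnlneg k hk1])]
end
end
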